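/- arXiv:2601.06538 — 7 statements merged into one kernel-verified Lean document; each statement's English description precedes it below -/
import Mathlib

section
/- Let (Z, 𝔷, T) be a probability space and δ a lower density on the completion of T (i.e., δ maps measurable sets to measurable sets with δ(∅)=∅, δ(Z)=Z, δ(A∩B)=δ(A)∩δ(B), T(δ(A)△A)=0, and δ(A)=δ(B) whenever A and B differ by a null set). If {C_i : i ∈ I} is an arbitrary (possibly uncountable) family of measurable sets such that C_i ⊆ δ(C_i) for every i ∈ I, then the union ⋃_{i∈I} C_i is measurable with respect to the completion of T, and ⋃_{i∈I} C_i ⊆ δ(⋃_{i∈I} C_i). -/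
open MeasureTheory Set

theorem stmt0 {Z : Type*} [MeasurableSpace Z] (T : Measure Z) [IsProbabilityMeasure T]
    (δ : Set Z → Set Z)
    (hmeas : ∀ A, NullMeasurableSet A T → NullMeasurableSet (δ A) T)
    (hempty : δ ∅ = ∅) (huniv : δ univ = univ)
    (hinter : ∀ A B, NullMeasurableSet A T → NullMeasurableSet B T →
      δ (A ∩ B) = δ A ∩ δ B)
    (hae : ∀ A, NullMeasurableSet A T → T (symmDiff (δ A) A) = 0)
    (hcong : ∀ A B, NullMeasurableSet A T → NullMeasurableSet B T →
      T (symmDiff A B) = 0 → δ A = δ B)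
    {ι : Type*} (C : ι → Set Z)
    (hC : ∀ i, NullMeasurableSet (C i) T)
    (hCsub : ∀ i, C i ⊆ δ (C i)) :
    NullMeasurableSet (⋃ i, C i) T ∧ (⋃ i, C i) ⊆ δ (⋃ i, C i) := by
  classical
  -- δ is monotone
  have hmono : ∀ A B, NullMeasurableSet A T → NullMeasurableSet B T → A ⊆ B →
      δ A ⊆ δ B := by
    intro A B hA hB hAB
    have h := hinter A B hA hB
    rw [inter_eq_self_of_subset_left hAB] at h
    rw [h]
    exact inter_subset_right
  set S : Set ENNReal := (fun t : Set ι => T (⋃ i ∈ t, C i)) '' {t | t.Countable} with hSdef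
  have hSne : S.Nonempty := ⟨_, ⟨∅, countable_empty, rfl⟩⟩
  obtain ⟨u, hu_mono, hu_tendsto, hu_mem⟩ := exists_seq_tendsto_sSup hSne (OrderTop.bddAbove S)
  choose t ht hTt using hu_mem
  set D : Set Z := ⋃ i ∈ ⋃ n, t n, C i with hDdef
  have htc : (⋃ n, t n).Countable := countable_iUnion ht
  have hDnm : NullMeasurableSet D T := NullMeasurableSet.biUnion htc (fun i _ => hC i)
  have hDle : T D ≤ sSup S := le_sSup ⟨_, htc, rfl⟩
  have hDge : sSup S ≤ T D := by
    refine le_of_tendsto hu_tendsto (Filter.Eventually.of_forall fun n => ?_)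
    rw [← hTt n]
    exact measure_mono (biUnion_subset_biUnion_left (subset_iUnion t n))
  have hDm : T D = sSup S := le_antisymm hDle hDge
  have hnull : ∀ i, T (C i \ D) = 0 := by
    intro i
    have hle : T (C i ∪ D) ≤ sSup S := by
      refine le_sSup ⟨insert i (⋃ n, t n), htc.insert i, ?_⟩
      show T (⋃ j ∈ insert i (⋃ n, t n), C j) = T (C i ∪ D)
      rw [biUnion_insert]
    have hdisj : Disjoint (C i \ D) D := disjoint_sdiff_left
    have hadd : T (C i \ D) + T D = T (C i ∪ D) := by
      rw [← measure_union₀ hDnm hdisj.aedisjoint, diff_union_self]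
    have hle2 : T (C i \ D) + T D ≤ 0 + T D := by
      rw [hadd, zero_add, hDm]
      exact hle
    have := (ENNReal.add_le_add_iff_right (measure_ne_top T D)).mp hle2
    exact le_antisymm this zero_le
  have hsub : ∀ i, C i ⊆ δ D := by
    intro i
    have hsymm : T (symmDiff (C i ∪ D) D) = 0 := by
      refine measure_mono_null ?_ (hnull i)
      intro x hx
      rcases Set.mem_symmDiff.mp hx with ⟨hx1, hx2⟩ | ⟨hx1, hx2⟩
      · rcases hx1 with h | h
        · exact ⟨h, hx2⟩
        · exact absurd h hx2
      · exact absurd (Or.inr hx1) hx2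
    have heq : δ (C i ∪ D) = δ D := hcong _ _ ((hC i).union hDnm) hDnm hsymm
    calc C i ⊆ δ (C i) := hCsub i
      _ ⊆ δ (C i ∪ D) := hmono _ _ (hC i) ((hC i).union hDnm) subset_union_left
      _ = δ D := heq
  have hU : (⋃ i, C i) ⊆ δ D := iUnion_subset hsub
  have hUD : T ((⋃ i, C i) \ D) = 0 := by
    refine measure_mono_null (fun x hx => ?_) (hae D hDnm)
    exact Set.mem_symmDiff.mpr (Or.inl ⟨hU hx.1, hx.2⟩)
  have hDsubU : D ⊆ ⋃ i, C i := iUnion₂_subset fun i _ => subset_iUnion C i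
  have hUeq : (⋃ i, C i) = D ∪ ((⋃ i, C i) \ D) := by
    rw [union_diff_cancel' (fun x hx => hx) hDsubU]
  have hUnm : NullMeasurableSet (⋃ i, C i) T := by
    rw [hUeq]
    exact hDnm.union (NullMeasurableSet.of_null hUD)
  have hsymmUD : T (symmDiff (⋃ i, C i) D) = 0 := by
    refine measure_mono_null (fun x hx => ?_) hUD
    rcases Set.mem_symmDiff.mp hx with ⟨hx1, hx2⟩ | ⟨hx1, hx2⟩
    · exact ⟨hx1, hx2⟩
    · exact absurd (hDsubU hx1) hx2
  have hfinal : δ (⋃ i, C i) = δ D := hcong _ _ hUnm hDnm hsymmUD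
  exact ⟨hUnm, hfinal ▸ hU⟩
end

section
/- Let (X, 𝔄, P) and (Y, 𝔅, Q) be probability spaces, R a probability measure on 𝔄 ⊗ 𝔅 with marginals P and Q, and {(𝔄_y, S_y) : y ∈ Y} a Q-disintegration of R. Let ℳ := {E ⊆ X × Y : ∃ N ∈ 𝔅₀ ∀ y ∉ N, Ŝ_y(E^y) = 0} and let 𝔄⊙𝔅 := {W △ N : W ∈ 𝔄 ⊗ 𝔅, N ∈ ℳ}. Then 𝔄⊙𝔅 is a σ-algebra containing 𝔄 ⊗ 𝔅, and the formula R̂_⊙(W △ N) := R(W) is a well-defined countably additive probability measure on 𝔄⊙𝔅 extending R. -/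
open MeasureTheory Set

lemma stmt6_aux {X Y : Type*} [mX : MeasurableSpace X] [mY : MeasurableSpace Y]
    (Q : Measure Y) [IsProbabilityMeasure Q]
    (R : Measure (X × Y)) [IsProbabilityMeasure R]
    (𝔄y : Y → MeasurableSpace X)
    (S : ∀ y, @Measure X (𝔄y y)) (hS : ∀ y, @IsProbabilityMeasure X (𝔄y y) (S y))
    (hDis1 : ∀ A : Set X, MeasurableSet A → ∃ N, MeasurableSet N ∧ Q N = 0 ∧
      (∀ y ∉ N, MeasurableSet[𝔄y y] A) ∧
      ∃ g : Y → ENNReal, Measurable g ∧ ∀ y ∉ N, S y A = g y)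
    (hDis2 : ∀ (A : Set X) (B : Set Y), MeasurableSet A → MeasurableSet B →
      ∫⁻ y in B, S y A ∂Q = R (A ×ˢ B)) :
    ∀ ⦃E : Set (X × Y)⦄, MeasurableSet E →
    ∃ N, ∃ g : Y → ENNReal, MeasurableSet N ∧ Q N = 0 ∧ Measurable g ∧ (∀ y, g y ≤ 1) ∧
      (∀ y ∉ N, MeasurableSet[𝔄y y] {x | (x, y) ∈ E}) ∧
      (∀ y ∉ N, S y {x | (x, y) ∈ E} = g y) ∧
      ∫⁻ y, g y ∂Q = R E := by
  refine MeasurableSpace.induction_on_inter (C := fun E _ =>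
    ∃ N, ∃ g : Y → ENNReal, MeasurableSet N ∧ Q N = 0 ∧ Measurable g ∧ (∀ y, g y ≤ 1) ∧
      (∀ y ∉ N, MeasurableSet[𝔄y y] {x | (x, y) ∈ E}) ∧
      (∀ y ∉ N, S y {x | (x, y) ∈ E} = g y) ∧
      ∫⁻ y, g y ∂Q = R E) generateFrom_prod.symm isPiSystem_prod ?_ ?_ ?_ ?_
  · -- empty
    refine ⟨∅, 0, MeasurableSet.empty, measure_empty, measurable_const, by simp, ?_, ?_, by simp⟩
    · intro y _
      have : {x : X | (x, y) ∈ (∅ : Set (X × Y))} = ∅ := by ext x; simp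
      rw [this]; exact @MeasurableSet.empty X (𝔄y y)
    · intro y _
      have : {x : X | (x, y) ∈ (∅ : Set (X × Y))} = ∅ := by ext x; simp
      rw [this]; simp
  · -- rectangles
    rintro _ ⟨A, hA, B, hB, rfl⟩
    have hAm : MeasurableSet A := hA
    have hBm : MeasurableSet B := hB
    obtain ⟨N, hN, hN0, hAmeas, g, hg, hgval⟩ := hDis1 A hAm
    refine ⟨N, B.indicator (fun y => min (g y) 1), hN, hN0,
      ((hg.min measurable_const).indicator hB), ?_, ?_, ?_, ?_⟩
    · intro y
      by_cases hy : y ∈ B <;> simp [Set.indicator_apply, hy, min_le_right]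
    · intro y hy
      by_cases hyB : y ∈ B
      · have : {x : X | (x, y) ∈ A ×ˢ B} = A := by ext x; simp [hyB]
        rw [this]; exact hAmeas y hy
      · have : {x : X | (x, y) ∈ A ×ˢ B} = ∅ := by ext x; simp [hyB]
        rw [this]; exact @MeasurableSet.empty X (𝔄y y)
    · intro y hy
      by_cases hyB : y ∈ B
      · have hsec : {x : X | (x, y) ∈ A ×ˢ B} = A := by ext x; simp [hyB]
        have hle : S y A ≤ 1 := (by haveI := hS y; exact prob_le_one : S y A ≤ 1)
        have hle' : g y ≤ 1 := by rw [← hgval y hy]; exact hle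
        rw [hsec, hgval y hy, Set.indicator_of_mem hyB]
        exact (inf_eq_left.mpr hle').symm
      · have hsec : {x : X | (x, y) ∈ A ×ˢ B} = ∅ := by ext x; simp [hyB]
        rw [hsec, Set.indicator_of_notMem hyB]
        simp
    · rw [lintegral_indicator hBm _, ← hDis2 A B hAm hBm]
      refine lintegral_congr_ae (ae_restrict_of_ae ?_)
      rw [ae_iff]
      refine measure_mono_null (fun y hy => ?_) hN0
      simp only [mem_setOf_eq] at hy
      by_contra hyN
      have hle : S y A ≤ 1 := (by haveI := hS y; exact prob_le_one : S y A ≤ 1)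
      rw [hgval y hyN] at hle
      exact hy (by rw [inf_eq_left.mpr hle, hgval y hyN])
  · -- complement
    rintro E hE ⟨N, g, hN, hN0, hg, hg1, hsect, hval, hint⟩
    refine ⟨N, fun y => 1 - g y, hN, hN0, measurable_const.sub hg,
      fun y => tsub_le_self, ?_, ?_, ?_⟩
    · intro y hy
      have : {x : X | (x, y) ∈ Eᶜ} = {x : X | (x, y) ∈ E}ᶜ := rfl
      rw [this]
      exact (hsect y hy).compl
    · intro y hy
      have hsec : {x : X | (x, y) ∈ Eᶜ} = {x : X | (x, y) ∈ E}ᶜ := rfl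
      rw [hsec]
      have : S y {x : X | (x, y) ∈ E}ᶜ = 1 - S y {x : X | (x, y) ∈ E} := by
        haveI := hS y; exact prob_compl_eq_one_sub (hsect y hy)
      rw [this, hval y hy]
    · have hgint : (∫⁻ y, g y ∂Q) ≠ ⊤ := by
        rw [hint]; exact measure_ne_top R E
      rw [lintegral_sub hg hgint (Filter.Eventually.of_forall hg1), hint,
        lintegral_one, measure_univ, prob_compl_eq_one_sub hE]
  · -- disjoint unions
    intro f hdisj hfm hC
    choose N g hN hN0 hg hg1 hsect hval hint using hC
    refine ⟨⋃ n, N n, fun y => min (∑' n, g n y) 1, MeasurableSet.iUnion hN,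
      measure_iUnion_null hN0, (Measurable.ennreal_tsum hg).min measurable_const,
      fun y => min_le_right _ _, ?_, ?_, ?_⟩
    · intro y hy
      have hsec : {x : X | (x, y) ∈ ⋃ n, f n} = ⋃ n, {x : X | (x, y) ∈ f n} := by
        ext x; simp
      rw [hsec]
      exact MeasurableSet.iUnion fun n => hsect n y (fun h => hy (mem_iUnion.2 ⟨n, h⟩))
    · intro y hy
      have hy' : ∀ n, y ∉ N n := fun n h => hy (mem_iUnion.2 ⟨n, h⟩)
      have hsec : {x : X | (x, y) ∈ ⋃ n, f n} = ⋃ n, {x : X | (x, y) ∈ f n} := by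
        ext x; simp
      have hdis : Pairwise (Function.onFun Disjoint fun n => {x : X | (x, y) ∈ f n}) := by
        intro m n hmn
        have := hdisj hmn
        rw [Function.onFun, Set.disjoint_left] at this ⊢
        intro x hxm hxn
        exact this hxm hxn
      have hmeas : ∀ n, MeasurableSet[𝔄y y] {x : X | (x, y) ∈ f n} :=
        fun n => hsect n y (hy' n)
      have hU := @measure_iUnion ℕ X (𝔄y y) (S y) _ _ hdis hmeas
      rw [hsec, hU]
      have hsum : ∑' n, S y {x : X | (x, y) ∈ f n} = ∑' n, g n y :=
        tsum_congr fun n => hval n y (hy' n)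
      have hle : (∑' n, g n y) ≤ 1 := by
        rw [← hsum, ← hU]
        exact (by haveI := hS y; exact prob_le_one)
      rw [hsum]; exact (inf_eq_left.mpr hle).symm
    · have hae : ∀ᵐ y ∂Q, min (∑' n, g n y) 1 = ∑' n, g n y := by
        rw [ae_iff]
        refine measure_mono_null (fun y hy => ?_) (measure_iUnion_null hN0)
        simp only [mem_setOf_eq] at hy
        by_contra hyN
        have hy' : ∀ n, y ∉ N n := fun n h => hyN (mem_iUnion.2 ⟨n, h⟩)
        have hsec : {x : X | (x, y) ∈ ⋃ n, f n} = ⋃ n, {x : X | (x, y) ∈ f n} := by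
          ext x; simp
        have hdis : Pairwise (Function.onFun Disjoint fun n => {x : X | (x, y) ∈ f n}) := by
          intro m n hmn
          have := hdisj hmn
          rw [Function.onFun, Set.disjoint_left] at this ⊢
          intro x hxm hxn
          exact this hxm hxn
        have hmeas : ∀ n, MeasurableSet[𝔄y y] {x : X | (x, y) ∈ f n} :=
          fun n => hsect n y (hy' n)
        have hU := @measure_iUnion ℕ X (𝔄y y) (S y) _ _ hdis hmeas
        have hsum : ∑' n, S y {x : X | (x, y) ∈ f n} = ∑' n, g n y :=
          tsum_congr fun n => hval n y (hy' n)
        have hle : (∑' n, g n y) ≤ 1 := by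
          rw [← hsum, ← hU]
          exact (by haveI := hS y; exact prob_le_one)
        exact hy (inf_eq_left.mpr hle)
      rw [lintegral_congr_ae hae, lintegral_tsum (fun n => (hg n).aemeasurable)]
      rw [measure_iUnion hdisj hfm]
      exact tsum_congr fun n => hint n


theorem stmt6 {X Y : Type*} [mX : MeasurableSpace X] [mY : MeasurableSpace Y]
    (P : Measure X) (Q : Measure Y) [IsProbabilityMeasure P] [IsProbabilityMeasure Q]
    (R : Measure (X × Y)) [IsProbabilityMeasure R]
    -- R has marginals P and Q
    (hRP : ∀ A, MeasurableSet A → R (A ×ˢ (univ : Set Y)) = P A)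
    (hRQ : ∀ B, MeasurableSet B → R ((univ : Set X) ×ˢ B) = Q B)
    -- {(𝔄_y, S_y) : y ∈ Y} is a Q-disintegration of R
    (𝔄y : Y → MeasurableSpace X) (hsub : ∀ y, 𝔄y y ≤ mX)
    (S : ∀ y, @Measure X (𝔄y y)) (hS : ∀ y, @IsProbabilityMeasure X (𝔄y y) (S y))
    (hDis1 : ∀ A : Set X, MeasurableSet A → ∃ N, MeasurableSet N ∧ Q N = 0 ∧
      (∀ y ∉ N, MeasurableSet[𝔄y y] A) ∧
      ∃ g : Y → ENNReal, Measurable g ∧ ∀ y ∉ N, S y A = g y)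
    (hDis2 : ∀ (A : Set X) (B : Set Y), MeasurableSet A → MeasurableSet B →
      ∫⁻ y in B, S y A ∂Q = R (A ×ˢ B))
    -- the σ-ideal ℳ of left nil sets
    (memM : Set (X × Y) → Prop)
    (hmemM : ∀ E, memM E ↔
      ∃ N, MeasurableSet N ∧ Q N = 0 ∧ ∀ y ∉ N, S y {x | (x, y) ∈ E} = 0)
    -- the family 𝔄⊙𝔅
    (AoB : Set (Set (X × Y)))
    (hAoB : ∀ V, V ∈ AoB ↔
      ∃ W N, MeasurableSet W ∧ memM N ∧ V = symmDiff W N) :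
    -- 𝔄⊙𝔅 is a σ-algebra containing 𝔄 ⊗ 𝔅
    (∀ W : Set (X × Y), MeasurableSet W → W ∈ AoB) ∧
    (univ : Set (X × Y)) ∈ AoB ∧
    (∀ V ∈ AoB, Vᶜ ∈ AoB) ∧
    (∀ f : ℕ → Set (X × Y), (∀ n, f n ∈ AoB) → (⋃ n, f n) ∈ AoB) ∧
    -- R̂_⊙(W △ N) := R(W) is a well-defined countably additive probability on 𝔄⊙𝔅
    ∃ Rd : Set (X × Y) → ENNReal,
      (∀ W N, MeasurableSet W → memM N → Rd (symmDiff W N) = R W) ∧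
      Rd ∅ = 0 ∧ Rd univ = 1 ∧
      (∀ f : ℕ → Set (X × Y), (∀ n, f n ∈ AoB) →
        Pairwise (Function.onFun Disjoint f) → Rd (⋃ n, f n) = ∑' n, Rd (f n)) := by

  classical
  have memM_mono : ∀ E F : Set (X × Y), E ⊆ F → memM F → memM E := by
    intro E F hEF hF
    obtain ⟨N, hN, hN0, hz⟩ := (hmemM F).1 hF
    refine (hmemM E).2 ⟨N, hN, hN0, fun y hy => ?_⟩
    exact measure_mono_null (fun x hx => hEF hx) (hz y hy)
  have memM_empty : memM ∅ := by
    refine (hmemM ∅).2 ⟨∅, MeasurableSet.empty, measure_empty, fun y _ => ?_⟩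
    have : {x : X | (x, y) ∈ (∅ : Set (X × Y))} = ∅ := by ext x; simp
    rw [this]; simp
  have memM_iUnion : ∀ f : ℕ → Set (X × Y), (∀ n, memM (f n)) → memM (⋃ n, f n) := by
    intro f hf
    choose N hN hN0 hz using fun n => (hmemM (f n)).1 (hf n)
    refine (hmemM _).2 ⟨⋃ n, N n, MeasurableSet.iUnion hN, measure_iUnion_null hN0, ?_⟩
    intro y hy
    have hsec : {x : X | (x, y) ∈ ⋃ n, f n} = ⋃ n, {x : X | (x, y) ∈ f n} := by ext x; simp
    rw [hsec]
    exact measure_iUnion_null fun n => hz n y (fun h => hy (mem_iUnion.2 ⟨n, h⟩))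
  have memM_union : ∀ E F : Set (X × Y), memM E → memM F → memM (E ∪ F) := by
    intro E F hE hF
    obtain ⟨N1, hN1, hN10, hz1⟩ := (hmemM E).1 hE
    obtain ⟨N2, hN2, hN20, hz2⟩ := (hmemM F).1 hF
    refine (hmemM _).2 ⟨N1 ∪ N2, hN1.union hN2, measure_union_null hN10 hN20, ?_⟩
    intro y hy
    have hsec : {x : X | (x, y) ∈ E ∪ F} =
        {x : X | (x, y) ∈ E} ∪ {x : X | (x, y) ∈ F} := rfl
    rw [hsec]
    exact measure_union_null (hz1 y fun h => hy (mem_union_left _ h))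
      (hz2 y fun h => hy (mem_union_right _ h))
  have keyR : ∀ E : Set (X × Y), MeasurableSet E → memM E → R E = 0 := by
    intro E hE hM
    obtain ⟨N, g, hN, hN0, hg, hg1, hsect, hval, hint⟩ :=
      stmt6_aux Q R 𝔄y S hS hDis1 hDis2 hE
    obtain ⟨N', hN', hN'0, hz⟩ := (hmemM E).1 hM
    rw [← hint]
    have hae : g =ᵐ[Q] 0 := by
      rw [Filter.EventuallyEq, ae_iff]
      refine measure_mono_null (fun y hy => ?_) (measure_union_null hN0 hN'0)
      simp only [mem_setOf_eq, Pi.zero_apply] at hy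
      by_contra hyN
      exact hy (by
        rw [← hval y (fun h => hyN (mem_union_left _ h))]
        exact hz y (fun h => hyN (mem_union_right _ h)))
    rw [lintegral_congr_ae hae]; simp
  have Rcongr : ∀ W W' : Set (X × Y), MeasurableSet W → MeasurableSet W' →
      memM (symmDiff W W') → R W = R W' := by
    intro W W' hW hW' hM
    have hmeas : MeasurableSet (symmDiff W W') := by
      rw [Set.symmDiff_def]
      exact (hW.diff hW').union (hW'.diff hW)
    have h0 : R (symmDiff W W') = 0 := keyR _ hmeas hM
    have hsub1 : W ⊆ W' ∪ symmDiff W W' := by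
      intro x hx; by_cases h : x ∈ W'
      · exact Or.inl h
      · exact Or.inr (Set.mem_symmDiff.2 (Or.inl ⟨hx, h⟩))
    have hsub2 : W' ⊆ W ∪ symmDiff W W' := by
      intro x hx; by_cases h : x ∈ W
      · exact Or.inl h
      · exact Or.inr (Set.mem_symmDiff.2 (Or.inr ⟨hx, h⟩))
    apply le_antisymm
    · calc R W ≤ R (W' ∪ symmDiff W W') := measure_mono hsub1
        _ ≤ R W' + R (symmDiff W W') := measure_union_le _ _
        _ = R W' := by rw [h0, add_zero]
    · calc R W' ≤ R (W ∪ symmDiff W W') := measure_mono hsub2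
        _ ≤ R W + R (symmDiff W W') := measure_union_le _ _
        _ = R W := by rw [h0, add_zero]
  have symmDiff_iUnion_subset : ∀ a b : ℕ → Set (X × Y),
      symmDiff (⋃ n, a n) (⋃ n, b n) ⊆ ⋃ n, symmDiff (a n) (b n) := by
    intro a b x hx
    rw [Set.mem_symmDiff] at hx
    rcases hx with ⟨h1, h2⟩ | ⟨h1, h2⟩
    · obtain ⟨n, hn⟩ := mem_iUnion.1 h1
      exact mem_iUnion.2 ⟨n, Set.mem_symmDiff.2 (Or.inl ⟨hn, fun h => h2 (mem_iUnion.2 ⟨n, h⟩)⟩)⟩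
    · obtain ⟨n, hn⟩ := mem_iUnion.1 h1
      exact mem_iUnion.2 ⟨n, Set.mem_symmDiff.2 (Or.inr ⟨hn, fun h => h2 (mem_iUnion.2 ⟨n, h⟩)⟩)⟩
  have main : ∀ V W : Set (X × Y), MeasurableSet W → memM (symmDiff W V) →
      (if h : ∃ W', MeasurableSet W' ∧ memM (symmDiff W' V) then R h.choose else 0) = R W := by
    intro V W hW hWV
    have hex : ∃ W', MeasurableSet W' ∧ memM (symmDiff W' V) := ⟨W, hW, hWV⟩
    rw [dif_pos hex]
    obtain ⟨hW', hW'V⟩ := hex.choose_spec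
    refine Rcongr _ _ hW' hW ?_
    refine memM_mono _ _ ?_ (memM_union _ _ hW'V hWV)
    intro x hx
    rw [Set.mem_symmDiff] at hx
    simp only [Set.mem_union, Set.mem_symmDiff]
    by_cases hxV : x ∈ V <;> tauto
  refine ⟨?_, ?_, ?_, ?_, ⟨fun V =>
      if h : ∃ W', MeasurableSet W' ∧ memM (symmDiff W' V) then R h.choose else 0,
      ?_, ?_, ?_, ?_⟩⟩
  · -- measurable sets are in AoB
    intro W hW
    refine (hAoB W).2 ⟨W, ∅, hW, memM_empty, ?_⟩
    rw [Set.symmDiff_def]; simp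
  · -- univ
    refine (hAoB _).2 ⟨univ, ∅, MeasurableSet.univ, memM_empty, ?_⟩
    rw [Set.symmDiff_def]; simp
  · -- complements
    intro V hV
    obtain ⟨W, Nn, hW, hN, rfl⟩ := (hAoB V).1 hV
    refine (hAoB _).2 ⟨Wᶜ, Nn, hW.compl, hN, ?_⟩
    ext x
    simp only [Set.mem_compl_iff, Set.mem_symmDiff]
    tauto
  · -- countable unions
    intro f hf
    choose W Nn hW hN hfN using fun n => (hAoB (f n)).1 (hf n)
    have hWf : ∀ n, memM (symmDiff (W n) (f n)) := fun n => by
      rw [hfN n, symmDiff_symmDiff_cancel_left]; exact hN n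
    have hM : memM (symmDiff (⋃ n, W n) (⋃ n, f n)) :=
      memM_mono _ _ (symmDiff_iUnion_subset W f) (memM_iUnion _ hWf)
    exact (hAoB _).2 ⟨⋃ n, W n, _, MeasurableSet.iUnion hW, hM,
      (symmDiff_symmDiff_cancel_left _ _).symm⟩
  · -- Rd (W ∆ N) = R W
    intro W N hW hN
    refine main _ _ hW ?_
    rw [symmDiff_symmDiff_cancel_left]
    exact hN
  · -- Rd ∅ = 0
    have h : symmDiff (∅ : Set (X × Y)) ∅ = ∅ := by rw [Set.symmDiff_def]; simp
    exact (main ∅ ∅ MeasurableSet.empty (by rw [h]; exact memM_empty)).trans measure_empty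
  · -- Rd univ = 1
    have h : symmDiff (univ : Set (X × Y)) univ = ∅ := by rw [Set.symmDiff_def]; simp
    exact (main univ univ MeasurableSet.univ (by rw [h]; exact memM_empty)).trans measure_univ
  · -- countable additivity
    intro f hf hd
    choose W Nn hW hN hfN using fun n => (hAoB (f n)).1 (hf n)
    have hWf : ∀ n, memM (symmDiff (W n) (f n)) := fun n => by
      rw [hfN n, symmDiff_symmDiff_cancel_left]; exact hN n
    have hMU : memM (symmDiff (⋃ n, W n) (⋃ n, f n)) :=
      memM_mono _ _ (symmDiff_iUnion_subset W f) (memM_iUnion _ hWf)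
    have hRdf : ∀ n,
        (if h : ∃ W', MeasurableSet W' ∧ memM (symmDiff W' (f n)) then R h.choose else 0)
          = R (W n) := fun n => main (f n) (W n) (hW n) (hWf n)
    have hDm : ∀ n, MeasurableSet (disjointed W n) := MeasurableSet.disjointed hW
    have hI : R (⋃ n, W n) = ∑' n, R (disjointed W n) := by
      rw [← iUnion_disjointed, measure_iUnion (disjoint_disjointed W) hDm]
    have hinter : ∀ m n, m ≠ n → memM (W m ∩ W n) := by
      intro m n hmn
      refine memM_mono _ _ ?_ (memM_union _ _ (hWf m) (hWf n))
      intro x hx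
      have hdj := hd hmn
      rw [Function.onFun, Set.disjoint_left] at hdj
      simp only [Set.mem_union, Set.mem_symmDiff]
      by_cases h1 : x ∈ f m
      · exact Or.inr (Or.inl ⟨hx.2, fun h => hdj h1 h⟩)
      · exact Or.inl (Or.inl ⟨hx.1, h1⟩)
    have hWD : ∀ n, R (W n) = R (disjointed W n) := by
      intro n
      refine Rcongr _ _ (hW n) (hDm n) ?_
      have heq : symmDiff (W n) (disjointed W n) = W n \ disjointed W n :=
        symmDiff_of_ge (disjointed_subset W n)
      rw [heq]
      refine memM_mono _ _ ?_
        (memM_iUnion (fun m => if m = n then ∅ else W m ∩ W n) ?_)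
      · intro x hx
        have hx1 : x ∈ W n := hx.1
        have hx2 : x ∉ disjointed W n := hx.2
        have hxU : x ∈ ⋃ m, disjointed W m := by
          rw [iUnion_disjointed]; exact mem_iUnion.2 ⟨n, hx1⟩
        obtain ⟨m, hm⟩ := mem_iUnion.1 hxU
        have hmn : m ≠ n := fun h => hx2 (h ▸ hm)
        refine mem_iUnion.2 ⟨m, ?_⟩
        simp only [if_neg hmn]
        exact ⟨disjointed_subset W m hm, hx1⟩
      · intro m
        by_cases hmn : m = n
        · simp only [if_pos hmn]; exact memM_empty
        · simp only [if_neg hmn]; exact hinter m n hmn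
    refine (main (⋃ n, f n) (⋃ n, W n) (MeasurableSet.iUnion hW) hMU).trans ?_
    rw [hI]
    exact tsum_congr fun n => ((hWD n).symm.trans (hRdf n).symm)
end

section
/- Let (X, 𝔄, P) and (Y, 𝔅, Q) be probability spaces, R a probability on 𝔄 ⊗ 𝔅 with marginals P and Q, and {(𝔄_y, S_y) : y ∈ Y} a Q-disintegration of R. If E ∈ 𝔄⊙𝔅 (the σ-algebra generated by 𝔄 ⊗ 𝔅 and the σ-ideal ℳ of left nil sets), then R̂_⊙(E) = ∫_Y Ŝ_y(E^y) dQ̂(y); in particular y ↦ Ŝ_y(E^y) is Q̂-measurable. -/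
open MeasureTheory Set

theorem aux_key {X Y : Type*} [mX : MeasurableSpace X] [mY : MeasurableSpace Y]
    (Q : Measure Y) [IsProbabilityMeasure Q]
    (R : Measure (X × Y)) [IsProbabilityMeasure R]
    (𝔄y : Y → MeasurableSpace X)
    (S : ∀ y, @Measure X (𝔄y y)) (hS : ∀ y, @IsProbabilityMeasure X (𝔄y y) (S y))
    (hDis1 : ∀ A : Set X, MeasurableSet A → ∃ N, MeasurableSet N ∧ Q N = 0 ∧
      (∀ y ∉ N, MeasurableSet[𝔄y y] A) ∧
      ∃ g : Y → ENNReal, Measurable g ∧ ∀ y ∉ N, S y A = g y)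
    (hDis2 : ∀ (A : Set X) (B : Set Y), MeasurableSet A → MeasurableSet B →
      ∫⁻ y in B, S y A ∂Q = R (A ×ˢ B)) :
    ∀ ⦃W : Set (X × Y)⦄, MeasurableSet W →
      ∃ N : Set Y, MeasurableSet N ∧ Q N = 0 ∧
        (∀ y ∉ N, MeasurableSet[𝔄y y] {x | (x, y) ∈ W}) ∧
        ∃ g : Y → ENNReal, Measurable g ∧ (∀ y, g y ≤ 1) ∧
          (∀ y ∉ N, S y {x | (x, y) ∈ W} = g y) ∧ ∫⁻ y, g y ∂Q = R W := by
  refine MeasurableSpace.induction_on_inter generateFrom_prod.symm isPiSystem_prod ?_ ?_ ?_ ?_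
  · -- empty set
    refine ⟨∅, MeasurableSet.empty, measure_empty, fun y _ => ?_, 0, measurable_const,
      fun y => zero_le_one, fun y _ => ?_, by simp⟩
    · simp only [mem_empty_iff_false, setOf_false]
      exact @MeasurableSet.empty _ (𝔄y y)
    · simp only [mem_empty_iff_false, setOf_false, measure_empty]; rfl
  · -- rectangles
    rintro t ⟨A, hA, B, hB, rfl⟩
    simp only [mem_setOf_eq] at hA hB
    obtain ⟨N, hNm, hN0, hAm, g₀, hg₀m, hg₀⟩ := hDis1 A hA
    refine ⟨N, hNm, hN0, fun y hy => ?_, B.indicator (fun y => min (g₀ y) 1), ?_, ?_, ?_, ?_⟩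
    · by_cases hyB : y ∈ B
      · have : {x | (x, y) ∈ A ×ˢ B} = A := by ext x; simp [hyB]
        rw [this]; exact hAm y hy
      · have : {x | (x, y) ∈ A ×ˢ B} = ∅ := by ext x; simp [hyB]
        rw [this]; exact @MeasurableSet.empty _ (𝔄y y)
    · exact ((hg₀m.min measurable_const).indicator hB)
    · intro y
      by_cases hyB : y ∈ B <;> simp [indicator, hyB, min_le_right]
    · intro y hy
      haveI := hS y
      by_cases hyB : y ∈ B
      · have h1 : {x | (x, y) ∈ A ×ˢ B} = A := by ext x; simp [hyB]
        have h2 : S y A ≤ 1 := prob_le_one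
        rw [h1, indicator_of_mem hyB, ← hg₀ y hy, min_eq_left h2]
      · have h1 : {x | (x, y) ∈ A ×ˢ B} = ∅ := by ext x; simp [hyB]
        rw [h1, indicator_of_notMem hyB, measure_empty]
    · rw [lintegral_indicator hB, ← hDis2 A B hA hB]
      refine lintegral_congr_ae ?_
      have hN' : (Q.restrict B) N = 0 := le_antisymm (le_trans (Measure.restrict_le_self N) hN0.le) zero_le
      filter_upwards [measure_eq_zero_iff_ae_notMem.mp hN'] with y hy
      haveI := hS y
      rw [← hg₀ y hy, min_eq_left prob_le_one]
  · -- complement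
    rintro t htm ⟨N, hNm, hN0, hsec, g, hgm, hg1, hgeq, hgint⟩
    refine ⟨N, hNm, hN0, fun y hy => ?_, fun y => 1 - g y, hgm.const_sub 1,
      fun y => tsub_le_self, fun y hy => ?_, ?_⟩
    · have : {x | (x, y) ∈ tᶜ} = {x | (x, y) ∈ t}ᶜ := rfl
      rw [this]; exact (hsec y hy).compl
    · haveI := hS y
      have : {x | (x, y) ∈ tᶜ} = {x | (x, y) ∈ t}ᶜ := rfl
      rw [this, measure_compl (hsec y hy) (measure_ne_top _ _), measure_univ, hgeq y hy]
    · have hne : ∫⁻ y, g y ∂Q ≠ ⊤ := by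
        rw [hgint]; exact measure_ne_top _ _
      rw [lintegral_sub hgm hne (Filter.Eventually.of_forall hg1), lintegral_one, measure_univ,
        hgint, measure_compl htm (measure_ne_top _ _), measure_univ]
  · -- disjoint union
    rintro f hdisj hfm hf
    choose N hNm hN0 hsec g hgm hg1 hgeq hgint using hf
    refine ⟨⋃ i, N i, MeasurableSet.iUnion hNm, ?_, fun y hy => ?_,
      fun y => min (∑' i, g i y) 1, ?_, fun y => min_le_right _ _, fun y hy => ?_, ?_⟩
    · exact le_antisymm (le_trans (measure_iUnion_le N) (by simp [hN0])) zero_le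
    · have : {x | (x, y) ∈ ⋃ i, f i} = ⋃ i, {x | (x, y) ∈ f i} := by
        ext x; simp
      rw [this]
      exact MeasurableSet.iUnion fun i => hsec i y (fun h => hy (mem_iUnion.mpr ⟨i, h⟩))
    · exact (Measurable.ennreal_tsum fun i => hgm i).min measurable_const
    · haveI := hS y
      have hy' : ∀ i, y ∉ N i := fun i h => hy (mem_iUnion.mpr ⟨i, h⟩)
      have hsecd : Pairwise (Function.onFun Disjoint fun i => {x | (x, y) ∈ f i}) := by
        intro i j hij
        exact Disjoint.preimage (fun x => (x, y)) (hdisj hij)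
      have : {x | (x, y) ∈ ⋃ i, f i} = ⋃ i, {x | (x, y) ∈ f i} := by ext x; simp
      have hsum : ∑' i, S y {x | (x, y) ∈ f i} = ∑' i, g i y :=
        tsum_congr fun i => hgeq i y (hy' i)
      have hle : (∑' i, g i y) ≤ 1 := by
        rw [← hsum, ← measure_iUnion hsecd (fun i => hsec i y (hy' i))]
        exact prob_le_one
      rw [this, measure_iUnion hsecd (fun i => hsec i y (hy' i)), hsum]
      exact (min_eq_left hle).symm
    · have hcong : (fun y => min (∑' i, g i y) 1) =ᵐ[Q] fun y => ∑' i, g i y := by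
        have hN : Q (⋃ i, N i) = 0 :=
          le_antisymm (le_trans (measure_iUnion_le N) (by simp [hN0])) zero_le
        filter_upwards [measure_eq_zero_iff_ae_notMem.mp hN] with y hy
        haveI := hS y
        have hy' : ∀ i, y ∉ N i := fun i h => hy (mem_iUnion.mpr ⟨i, h⟩)
        have hsecd : Pairwise (Function.onFun Disjoint fun i => {x | (x, y) ∈ f i}) := by
          intro i j hij
          exact Disjoint.preimage (fun x => (x, y)) (hdisj hij)
        have hle : ∑' i, g i y ≤ 1 := by
          rw [← tsum_congr fun i => hgeq i y (hy' i),
            ← measure_iUnion hsecd (fun i => hsec i y (hy' i))]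
          exact prob_le_one
        exact min_eq_left hle
      rw [lintegral_congr_ae hcong, lintegral_tsum (fun i => (hgm i).aemeasurable),
        measure_iUnion hdisj hfm]
      exact tsum_congr fun i => hgint i

theorem stmt7 {X Y : Type*} [mX : MeasurableSpace X] [mY : MeasurableSpace Y]
    (P : Measure X) (Q : Measure Y) [IsProbabilityMeasure P] [IsProbabilityMeasure Q]
    (R : Measure (X × Y)) [IsProbabilityMeasure R]
    (hRP : ∀ A, MeasurableSet A → R (A ×ˢ (univ : Set Y)) = P A)
    (hRQ : ∀ B, MeasurableSet B → R ((univ : Set X) ×ˢ B) = Q B)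
    (𝔄y : Y → MeasurableSpace X) (hsub : ∀ y, 𝔄y y ≤ mX)
    (S : ∀ y, @Measure X (𝔄y y)) (hS : ∀ y, @IsProbabilityMeasure X (𝔄y y) (S y))
    (hDis1 : ∀ A : Set X, MeasurableSet A → ∃ N, MeasurableSet N ∧ Q N = 0 ∧
      (∀ y ∉ N, MeasurableSet[𝔄y y] A) ∧
      ∃ g : Y → ENNReal, Measurable g ∧ ∀ y ∉ N, S y A = g y)
    (hDis2 : ∀ (A : Set X) (B : Set Y), MeasurableSet A → MeasurableSet B →
      ∫⁻ y in B, S y A ∂Q = R (A ×ˢ B))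
    (memM : Set (X × Y) → Prop)
    (hmemM : ∀ E, memM E ↔
      ∃ N, MeasurableSet N ∧ Q N = 0 ∧ ∀ y ∉ N, S y {x | (x, y) ∈ E} = 0)
    -- the measure R̂_⊙, determined by its values on sets W △ N
    (Rd : Set (X × Y) → ENNReal)
    (hRd : ∀ W N, MeasurableSet W → memM N → Rd (symmDiff W N) = R W)
    -- a set E ∈ 𝔄⊙𝔅
    (E : Set (X × Y))
    (hE : ∃ W N, MeasurableSet W ∧ memM N ∧ E = symmDiff W N) :
    -- y ↦ Ŝ_y(E^y) is measurable for the completion of Q, i.e. a.e.-measurable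
    AEMeasurable (fun y => S y {x | (x, y) ∈ E}) Q ∧
    Rd E = ∫⁻ y, S y {x | (x, y) ∈ E} ∂Q := by
  obtain ⟨W, M, hWm, hMm, rfl⟩ := hE
  obtain ⟨N₀, hN₀m, hN₀0, hMnull⟩ := (hmemM M).mp hMm
  obtain ⟨N, hNm, hN0, hsec, g, hgm, hg1, hgeq, hgint⟩ :=
    aux_key Q R 𝔄y S hS hDis1 hDis2 hWm
  have hNtot : Q (N ∪ N₀) = 0 :=
    le_antisymm (le_trans (measure_union_le _ _) (by simp [hN0, hN₀0])) zero_le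
  have key : ∀ y, y ∉ N ∪ N₀ → S y {x | (x, y) ∈ symmDiff W M} = g y := by
    intro y hy
    have hyN : y ∉ N := fun h => hy (mem_union_left _ h)
    have hyN₀ : y ∉ N₀ := fun h => hy (mem_union_right _ h)
    have hsecsd : {x | (x, y) ∈ symmDiff W M} = symmDiff {x | (x, y) ∈ W} {x | (x, y) ∈ M} := by
      ext x
      simp only [mem_setOf_eq, Set.mem_symmDiff, symmDiff_def]
      constructor
      · rintro (⟨h1, h2⟩ | ⟨h1, h2⟩)
        · exact Or.inl ⟨h1, h2⟩
        · exact Or.inr ⟨h1, h2⟩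
      · rintro (⟨h1, h2⟩ | ⟨h1, h2⟩)
        · exact Or.inl ⟨h1, h2⟩
        · exact Or.inr ⟨h1, h2⟩
    have hnull : S y (symmDiff (symmDiff {x | (x, y) ∈ W} {x | (x, y) ∈ M}) {x | (x, y) ∈ W}) = 0 := by
      have : symmDiff (symmDiff {x | (x, y) ∈ W} {x | (x, y) ∈ M}) {x | (x, y) ∈ W}
          = {x | (x, y) ∈ M} := by
        rw [symmDiff_comm, symmDiff_symmDiff_cancel_left]
      rw [this]
      exact hMnull y hyN₀
    have haeq : (symmDiff {x | (x, y) ∈ W} {x | (x, y) ∈ M} : Set X) =ᵐ[S y] ({x | (x, y) ∈ W} : Set X) := by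
      rw [← measure_symmDiff_eq_zero_iff]
      exact hnull
    rw [hsecsd, measure_congr haeq, hgeq y hyN]
  have haeeq : (fun y => S y {x | (x, y) ∈ symmDiff W M}) =ᵐ[Q] g := by
    filter_upwards [measure_eq_zero_iff_ae_notMem.mp hNtot] with y hy
    exact key y hy
  refine ⟨hgm.aemeasurable.congr haeeq.symm, ?_⟩
  rw [hRd W M hWm hMm, lintegral_congr_ae haeeq, hgint]
end

section
/- Let (X, 𝔄, P) and (Y, 𝔅, Q) be probability spaces, R ∈ P·Q (a probability on 𝔄 ⊗ 𝔅 with marginals P, Q), and {(𝔄_y, S_y) : y ∈ Y} a Q-disintegration of R. If f : X × Y → ℝ is bounded and measurable with respect to 𝔄⊙𝔅 (so in particular with respect to the completion of 𝔄 ⊗ 𝔅 under R), then: (a) for Q-almost every y ∈ Y, the section f^y = f(·, y) is measurable with respect to the completion of 𝔄_y under S_y; (b) if f = 0 R̂_⊙-almost everywhere, then for Q-almost every y, f^y = 0 Ŝ_y-almost everywhere; and (c) ∫_{X×Y} f dR̂_⊙ = ∫_Y (∫_X f^y dŜ_y) dQ̂(y). -/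
open MeasureTheory Set

lemma aux_nullDecomp {α : Type*} [MeasurableSpace α] (μ : Measure α) [IsProbabilityMeasure μ]
    (V : Set α) (h : μ V + μ Vᶜ = 1) :
    ∃ H M Z : Set α, MeasurableSet H ∧ MeasurableSet Z ∧ μ Z = 0 ∧ M ⊆ Z ∧
      V = symmDiff H M ∧ μ H = μ V := by
  set H := toMeasurable μ V with hH
  set K := toMeasurable μ Vᶜ with hK
  have hVH : V ⊆ H := subset_toMeasurable μ V
  have hVK : Vᶜ ⊆ K := subset_toMeasurable μ Vᶜ
  have hHm : MeasurableSet H := measurableSet_toMeasurable μ V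
  have hKm : MeasurableSet K := measurableSet_toMeasurable μ Vᶜ
  have hsum : μ H + μ K = 1 := by
    rw [measure_toMeasurable, measure_toMeasurable]; exact h
  have hunion : μ (H ∪ K) = 1 := by
    have he : H ∪ K = univ := eq_univ_of_univ_subset
      (by intro p _
          rcases Classical.em (p ∈ V) with hp | hp
          · exact Or.inl (hVH hp)
          · exact Or.inr (hVK hp))
    rw [he, measure_univ]
  have hinter : μ (H ∩ K) = 0 := by
    have h2 := measure_union_add_inter (μ := μ) H hKm
    rw [hsum, hunion] at h2
    have h3 := ENNReal.add_right_inj (a := 1) ENNReal.one_ne_top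
      (b := μ (H ∩ K)) (c := 0)
    rw [add_zero] at h3
    exact h3.mp h2
  refine ⟨H, H \ V, H ∩ K, hHm, hHm.inter hKm, hinter, ?_, ?_, measure_toMeasurable V⟩
  · intro p hp
    exact ⟨hp.1, hVK hp.2⟩
  · ext p
    simp only [mem_symmDiff, mem_diff]
    constructor
    · intro hp
      exact Or.inl ⟨hVH hp, fun hcon => hcon.2 hp⟩
    · rintro (⟨hpH, hpn⟩ | ⟨⟨h1, h2⟩, h3⟩)
      · by_contra hpv
        exact hpn ⟨hpH, hpv⟩
      · exact absurd h1 h3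

theorem stmt8 {X Y : Type*} [mX : MeasurableSpace X] [mY : MeasurableSpace Y]
    (P : Measure X) (Q : Measure Y) [IsProbabilityMeasure P] [IsProbabilityMeasure Q]
    (R : Measure (X × Y)) [IsProbabilityMeasure R]
    (hRP : ∀ A, MeasurableSet A → R (A ×ˢ (univ : Set Y)) = P A)
    (hRQ : ∀ B, MeasurableSet B → R ((univ : Set X) ×ˢ B) = Q B)
    (𝔄y : Y → MeasurableSpace X) (hsub : ∀ y, 𝔄y y ≤ mX)
    (S : ∀ y, @Measure X (𝔄y y)) (hS : ∀ y, @IsProbabilityMeasure X (𝔄y y) (S y))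
    (hDis1 : ∀ A : Set X, MeasurableSet A → ∃ N, MeasurableSet N ∧ Q N = 0 ∧
      (∀ y ∉ N, MeasurableSet[𝔄y y] A) ∧
      ∃ g : Y → ENNReal, Measurable g ∧ ∀ y ∉ N, S y A = g y)
    (hDis2 : ∀ (A : Set X) (B : Set Y), MeasurableSet A → MeasurableSet B →
      ∫⁻ y in B, S y A ∂Q = R (A ×ˢ B))
    (memM : Set (X × Y) → Prop)
    (hmemM : ∀ E, memM E ↔
      ∃ N, MeasurableSet N ∧ Q N = 0 ∧ ∀ y ∉ N, S y {x | (x, y) ∈ E} = 0)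
    -- the σ-algebra 𝔄⊙𝔅
    (mAoB : MeasurableSpace (X × Y))
    (hmAoB : ∀ V : Set (X × Y), MeasurableSet[mAoB] V ↔
      ∃ W N, MeasurableSet W ∧ memM N ∧ V = symmDiff W N)
    -- the measure R̂_⊙ on 𝔄⊙𝔅
    (Rd : @Measure (X × Y) mAoB)
    (hRd : ∀ W N, MeasurableSet W → memM N → Rd (symmDiff W N) = R W)
    -- f bounded and 𝔄⊙𝔅-measurable
    (f : X × Y → ℝ) (hf : @Measurable _ _ mAoB _ f) (C : ℝ) (hbd : ∀ p, |f p| ≤ C) :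
    -- (a) for Q-a.e. y the section f^y is measurable w.r.t. the Ŝ_y-completion of 𝔄_y
    (∀ᵐ y ∂Q, @NullMeasurable X ℝ (𝔄y y) _ (fun x => f (x, y)) (S y)) ∧
    -- (b) if f = 0 R̂_⊙-a.e. then for Q-a.e. y, f^y = 0 Ŝ_y-a.e.
    (Rd {p | f p ≠ 0} = 0 → ∀ᵐ y ∂Q, S y {x | f (x, y) ≠ 0} = 0) ∧
    -- (c) the iterated integral formula
    ∫ p, f p ∂(Rd) = ∫ y, (∫ x, f (x, y) ∂(S y)) ∂Q := by
  classical
  have hSle : ∀ (y : Y) (A : Set X), S y A ≤ 1 := fun y A =>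
    le_trans (measure_mono (subset_univ A)) (le_of_eq (hS y).measure_univ)
  -- key lemma: disintegration formula for sets in the product σ-algebra
  have key : ∀ W : Set (X × Y), MeasurableSet[Prod.instMeasurableSpace] W →
      ∃ N, MeasurableSet N ∧ Q N = 0 ∧ ∃ g : Y → ENNReal, Measurable g ∧ (∀ y, g y ≤ 1) ∧
        (∀ y ∉ N, @NullMeasurableSet X (𝔄y y) {x | (x, y) ∈ W} (S y) ∧ S y {x | (x, y) ∈ W} = g y) ∧
        ∫⁻ y, g y ∂Q = R W := by
    have normal : ∀ (W : Set (X × Y)) (N : Set Y) (g : Y → ENNReal), MeasurableSet N → Q N = 0 →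
        Measurable g →
        (∀ y ∉ N, @NullMeasurableSet X (𝔄y y) {x | (x, y) ∈ W} (S y) ∧ S y {x | (x, y) ∈ W} = g y) →
        (∫⁻ y, g y ∂Q = R W) →
        ∃ N, MeasurableSet N ∧ Q N = 0 ∧ ∃ g : Y → ENNReal, Measurable g ∧ (∀ y, g y ≤ 1) ∧
          (∀ y ∉ N, @NullMeasurableSet X (𝔄y y) {x | (x, y) ∈ W} (S y) ∧
            S y {x | (x, y) ∈ W} = g y) ∧
          ∫⁻ y, g y ∂Q = R W := by
      intro W N g hN hQN hg hsec hint
      refine ⟨N, hN, hQN, fun y => min (g y) 1, hg.min measurable_const,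
        fun y => min_le_right _ _, fun y hy => ⟨(hsec y hy).1, ?_⟩, ?_⟩
      · have h1 : S y {x | (x, y) ∈ W} ≤ 1 := hSle y _
        rw [(hsec y hy).2] at h1 ⊢
        exact (min_eq_left h1).symm
      · rw [← hint]
        refine lintegral_congr_ae ?_
        filter_upwards [measure_eq_zero_iff_ae_notMem.mp hQN] with y hy
        have h1 : S y {x | (x, y) ∈ W} ≤ 1 := hSle y _
        rw [(hsec y hy).2] at h1
        exact min_eq_left h1
    intro W hW
    refine MeasurableSpace.induction_on_inter (m := Prod.instMeasurableSpace) (C := fun W _ => ∃ N, MeasurableSet N ∧ Q N = 0 ∧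
        ∃ g : Y → ENNReal, Measurable g ∧ (∀ y, g y ≤ 1) ∧
        (∀ y ∉ N, @NullMeasurableSet X (𝔄y y) {x | (x, y) ∈ W} (S y) ∧
          S y {x | (x, y) ∈ W} = g y) ∧
        ∫⁻ y, g y ∂Q = R W) generateFrom_prod.symm isPiSystem_prod ?_ ?_ ?_ ?_ _ hW
    case _ =>
      refine ⟨∅, MeasurableSet.empty, measure_empty, 0, measurable_const, fun _ => zero_le_one,
        fun y _ => ?_, by simp⟩
      have h0 : {x : X | (x, y) ∈ (∅ : Set (X × Y))} = ∅ := rfl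
      rw [h0]
      exact ⟨nullMeasurableSet_empty, by simp⟩
    case _ =>
      rintro t ⟨A, hA, B, hB, rfl⟩
      obtain ⟨N, hN, hQN, hAy, gA, hgA, hgAeq⟩ := hDis1 A hA
      refine normal _ N (B.indicator gA) hN hQN (hgA.indicator hB) (fun y hy => ?_) ?_
      · by_cases hyB : y ∈ B
        · have hsec : {x | (x, y) ∈ A ×ˢ B} = A := by ext x; simp [hyB]
          rw [hsec, indicator_of_mem hyB]
          exact ⟨(hAy y hy).nullMeasurableSet, hgAeq y hy⟩
        · have hsec : {x | (x, y) ∈ A ×ˢ B} = ∅ := by ext x; simp [hyB]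
          rw [hsec, indicator_of_notMem hyB]
          exact ⟨nullMeasurableSet_empty, measure_empty⟩
      · rw [lintegral_indicator hB, ← hDis2 A B hA hB]
        refine lintegral_congr_ae (ae_restrict_of_ae ?_)
        filter_upwards [measure_eq_zero_iff_ae_notMem.mp hQN] with y hy
        exact (hgAeq y hy).symm
    case _ =>
      rintro t htm ⟨N, hN, hQN, g, hg, hgle, hsec, hint⟩
      refine ⟨N, hN, hQN, fun y => 1 - g y, measurable_const.sub hg,
        fun y => tsub_le_self, fun y hy => ?_, ?_⟩
      · have hcs : {x | (x, y) ∈ tᶜ} = {x | (x, y) ∈ t}ᶜ := rfl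
        rw [hcs]
        refine ⟨(hsec y hy).1.compl, ?_⟩
        rw [measure_compl₀ (hsec y hy).1 (ne_of_lt (lt_of_le_of_lt (hSle y _) ENNReal.one_lt_top)),
          (hS y).measure_univ, (hsec y hy).2]
      · rw [lintegral_sub hg (by rw [hint]; exact measure_ne_top R t)
          (Filter.Eventually.of_forall hgle), hint, lintegral_one, measure_univ,
          measure_compl htm (measure_ne_top R t), measure_univ]
    case _ =>
      intro t hdisj htm iht
      choose N hN hQN g hg hgle hsec hint using iht
      refine normal _ (⋃ i, N i) (fun y => ∑' i, g i y) (MeasurableSet.iUnion hN)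
        (measure_iUnion_null hQN) (Measurable.ennreal_tsum hg) (fun y hy => ?_) ?_
      · have hy' : ∀ i, y ∉ N i := fun i h => hy (mem_iUnion.mpr ⟨i, h⟩)
        have hsec' : {x | (x, y) ∈ ⋃ i, t i} = ⋃ i, {x | (x, y) ∈ t i} := by
          ext x; simp
        rw [hsec']
        refine ⟨NullMeasurableSet.iUnion (fun i => (hsec i y (hy' i)).1), ?_⟩
        rw [measure_iUnion₀ (fun i j hij => Disjoint.aedisjoint ?_)
          (fun i => (hsec i y (hy' i)).1)]
        · exact tsum_congr fun i => (hsec i y (hy' i)).2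
        · exact Set.disjoint_left.mpr fun x hxi hxj =>
            Set.disjoint_left.mp (hdisj hij) hxi hxj
      · rw [lintegral_tsum (fun i => (hg i).aemeasurable)]
        rw [measure_iUnion hdisj htm]
        exact tsum_congr fun i => hint i
  -- memM ∅ and Rd = outer R on mAoB
  have hmem0 : memM ∅ := (hmemM ∅).2 ⟨∅, MeasurableSet.empty, measure_empty, fun y _ => by
    have h0 : {x : X | (x, y) ∈ (∅ : Set (X × Y))} = ∅ := rfl
    rw [h0]; exact measure_empty⟩
  have hRdR : ∀ V : Set (X × Y), MeasurableSet[mAoB] V → Rd V = R V := by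
    intro V hV
    have := hRd V ∅ hV hmem0
    rwa [show symmDiff V (∅ : Set (X × Y)) = V by simp [symmDiff_def]] at this
  have hRduniv : Rd univ = 1 := by rw [hRdR univ MeasurableSet.univ, measure_univ]
  have hRdprob : IsProbabilityMeasure Rd := ⟨hRduniv⟩
  -- every mAoB-measurable set is R-null-measurable: V = H ∆ M with H product-measurable, M R-null
  have nullDecomp : ∀ V : Set (X × Y), MeasurableSet[mAoB] V →
      ∃ H M Z : Set (X × Y), MeasurableSet[Prod.instMeasurableSpace] H ∧
        MeasurableSet[Prod.instMeasurableSpace] Z ∧ R Z = 0 ∧ M ⊆ Z ∧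
        V = symmDiff H M ∧ R H = Rd V := by
    intro V hV
    have hsum : R V + R Vᶜ = 1 := by
      rw [← hRdR V hV, ← hRdR Vᶜ hV.compl]
      have h := measure_add_measure_compl (μ := Rd) hV
      rwa [hRduniv] at h
    obtain ⟨H, M, Z, hHm, hZm, hZ0, hMZ, hVHM, hHV⟩ :=
      @aux_nullDecomp (X × Y) Prod.instMeasurableSpace R _ V hsum
    exact ⟨H, M, Z, hHm, hZm, hZ0, hMZ, hVHM, by rw [hHV, hRdR V hV]⟩
  -- section lemma for mAoB-measurable sets
  have secSet : ∀ V : Set (X × Y), MeasurableSet[mAoB] V →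
      ∃ g : Y → ENNReal, Measurable g ∧
        (∀ᵐ y ∂Q, @NullMeasurableSet X (𝔄y y) {x | (x, y) ∈ V} (S y) ∧
          S y {x | (x, y) ∈ V} = g y) ∧
        ∫⁻ y, g y ∂Q = Rd V := by
    intro V hV
    obtain ⟨H, M, Z, hHm, hZm, hZ0, hMZ, hVHM, hHV⟩ := nullDecomp V hV
    obtain ⟨N1, hN1, hQN1, g, hg, hgle, hsec, hint⟩ := key H hHm
    obtain ⟨N2, hN2, hQN2, gZ, hgZ, hgZle, hsecZ, hintZ⟩ := key Z hZm
    have hgZ0 : ∀ᵐ y ∂Q, gZ y = 0 := by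
      rw [hZ0] at hintZ
      exact (lintegral_eq_zero_iff hgZ).mp hintZ
    refine ⟨g, hg, ?_, by rw [hint, hHV]⟩
    filter_upwards [measure_eq_zero_iff_ae_notMem.mp hQN1, measure_eq_zero_iff_ae_notMem.mp hQN2, hgZ0]
      with y hy1 hy2 hy3
    have hMy : S y {x | (x, y) ∈ M} = 0 := by
      refine le_antisymm ?_ zero_le
      calc S y {x | (x, y) ∈ M} ≤ S y {x | (x, y) ∈ Z} :=
            measure_mono (fun x hx => hMZ hx)
        _ = 0 := by rw [(hsecZ y hy2).2, hy3]
    have hsecV : {x | (x, y) ∈ V} = symmDiff {x | (x, y) ∈ H} {x | (x, y) ∈ M} := by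
      ext x
      rw [hVHM]
      simp [mem_symmDiff]
    have hnmsM : @NullMeasurableSet X (𝔄y y) {x | (x, y) ∈ M} (S y) :=
      NullMeasurableSet.of_null hMy
    constructor
    · rw [hsecV, Set.symmDiff_def]
      exact ((hsec y hy1).1.diff hnmsM).union (hnmsM.diff (hsec y hy1).1)
    · rw [hsecV, ← (hsec y hy1).2]
      refine measure_congr ?_
      rw [← measure_symmDiff_eq_zero_iff]
      have hcan : symmDiff (symmDiff {x | (x, y) ∈ H} {x | (x, y) ∈ M}) {x | (x, y) ∈ H}
          = {x | (x, y) ∈ M} := by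
        rw [symmDiff_comm, symmDiff_symmDiff_cancel_left]
      rw [hcan]
      exact hMy
  -- sections of mAoB-measurable functions are a.e. null measurable
  have secFun : ∀ (β : Type) (mβ : MeasurableSpace β),
      @MeasurableSpace.CountablyGenerated β mβ → ∀ g : X × Y → β, @Measurable _ _ mAoB mβ g →
      ∀ᵐ y ∂Q, @NullMeasurable X β (𝔄y y) mβ (fun x => g (x, y)) (S y) := by
    intro β mβ hcg g hg
    obtain ⟨b, hbc, hb⟩ := hcg.isCountablyGenerated
    have hmem : ∀ s ∈ b, MeasurableSet[mβ] s := fun s hs => by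
      rw [hb]; exact MeasurableSpace.measurableSet_generateFrom hs
    have hae : ∀ᵐ y ∂Q, ∀ s ∈ b,
        @NullMeasurableSet X (𝔄y y) ((fun x => g (x, y)) ⁻¹' s) (S y) := by
      rw [ae_ball_iff hbc]
      intro s hs
      obtain ⟨gs, hgs, hsec, hint⟩ := secSet (g ⁻¹' s) (hg (hmem s hs))
      filter_upwards [hsec] with y hy using hy.1
    filter_upwards [hae] with y hy
    have hm : @Measurable (@NullMeasurableSpace X (𝔄y y) (S y)) β
        (@NullMeasurableSpace.instMeasurableSpace X (𝔄y y) (S y)) mβ (fun x => g (x, y)) := by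
      rw [hb]
      exact @measurable_generateFrom (@NullMeasurableSpace X (𝔄y y) (S y)) β
        (@NullMeasurableSpace.instMeasurableSpace X (𝔄y y) (S y)) b (fun x => g (x, y))
        (fun t ht => hy t ht)
    exact hm
  have parta : ∀ᵐ y ∂Q, @NullMeasurable X ℝ (𝔄y y) _ (fun x => f (x, y)) (S y) :=
    secFun ℝ _ inferInstance f hf
  have hfne : MeasurableSet[mAoB] {p | f p ≠ 0} := by
    have : {p | f p ≠ 0} = f ⁻¹' ({0}ᶜ) := rfl
    rw [this]
    exact hf (measurableSet_singleton 0).compl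
  have partb : Rd {p | f p ≠ 0} = 0 → ∀ᵐ y ∂Q, S y {x | f (x, y) ≠ 0} = 0 := by
    intro h0
    obtain ⟨g, hg, hsec, hint⟩ := secSet _ hfne
    rw [h0] at hint
    have hg0 : ∀ᵐ y ∂Q, g y = 0 := (lintegral_eq_zero_iff hg).mp hint
    filter_upwards [hsec, hg0] with y h1 h2
    exact h1.2.trans h2
  -- a.e. AEMeasurable sections for ENNReal-valued mAoB-measurable functions
  have hSaem : ∀ g : X × Y → ENNReal, @Measurable _ _ mAoB _ g →
      ∀ᵐ y ∂Q, AEMeasurable (fun x => g (x, y)) (S y) := by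
    intro g hg
    filter_upwards [secFun ENNReal _ inferInstance g hg] with y hy
    exact hy.aemeasurable
  -- iterated lower integral formula for ENNReal-valued functions
  have lint : ∀ g : X × Y → ENNReal, @Measurable _ _ mAoB _ g →
      (∃ φ : Y → ENNReal, Measurable φ ∧ (fun y => ∫⁻ x, g (x, y) ∂S y) =ᵐ[Q] φ) ∧
      ∫⁻ p, g p ∂(Rd) = ∫⁻ y, ∫⁻ x, g (x, y) ∂S y ∂Q := by
    intro g hg
    refine @Measurable.ennreal_induction (X × Y) mAoB
      (fun g => (∃ φ : Y → ENNReal, Measurable φ ∧ (fun y => ∫⁻ x, g (x, y) ∂S y) =ᵐ[Q] φ) ∧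
        ∫⁻ p, g p ∂(Rd) = ∫⁻ y, ∫⁻ x, g (x, y) ∂S y ∂Q) ?_ ?_ ?_ g hg
    · -- indicator
      intro c s hs
      obtain ⟨gs, hgs, hsec, hint⟩ := secSet s hs
      have inner : ∀ᵐ y ∂Q, ∫⁻ x, s.indicator (fun _ => c) (x, y) ∂S y = c * gs y := by
        filter_upwards [hsec] with y hy
        have hrw : (fun x => s.indicator (fun _ => c) (x, y))
            = ({x | (x, y) ∈ s}).indicator (fun _ => c) := rfl
        rw [hrw, lintegral_indicator_const₀ hy.1, hy.2]
      constructor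
      · exact ⟨fun y => c * gs y, hgs.const_mul c, inner⟩
      · rw [lintegral_indicator_const hs c, lintegral_congr_ae inner,
          lintegral_const_mul c hgs, hint]
    · -- addition
      rintro f1 f2 hdisj hm1 hm2 ⟨⟨φ1, hφ1, heq1⟩, hint1⟩ ⟨⟨φ2, hφ2, heq2⟩, hint2⟩
      have inner : ∀ᵐ y ∂Q, ∫⁻ x, (f1 + f2) (x, y) ∂S y
          = (∫⁻ x, f1 (x, y) ∂S y) + ∫⁻ x, f2 (x, y) ∂S y := by
        filter_upwards [hSaem f1 hm1] with y hy
        simp only [Pi.add_apply]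
        exact lintegral_add_left' hy _
      have innerφ : (fun y => ∫⁻ x, (f1 + f2) (x, y) ∂S y) =ᵐ[Q] fun y => φ1 y + φ2 y := by
        filter_upwards [inner, heq1, heq2] with y h1 h2 h3
        rw [h1, h2, h3]
      constructor
      · exact ⟨fun y => φ1 y + φ2 y, hφ1.add hφ2, innerφ⟩
      · calc ∫⁻ p, (f1 + f2) p ∂(Rd) = (∫⁻ p, f1 p ∂(Rd)) + ∫⁻ p, f2 p ∂(Rd) := by
              simp only [Pi.add_apply]
              exact lintegral_add_left hm1 _
          _ = (∫⁻ y, φ1 y ∂Q) + ∫⁻ y, φ2 y ∂Q := by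
              rw [hint1, hint2, lintegral_congr_ae heq1, lintegral_congr_ae heq2]
          _ = ∫⁻ y, (φ1 y + φ2 y) ∂Q := (lintegral_add_left hφ1 _).symm
          _ = ∫⁻ y, ∫⁻ x, (f1 + f2) (x, y) ∂S y ∂Q := (lintegral_congr_ae innerφ).symm
    · -- monotone supremum
      intro fs hms hmono ihs
      choose φ hφm hφeq using fun n => (ihs n).1
      have hint : ∀ n, ∫⁻ p, fs n p ∂(Rd) = ∫⁻ y, φ n y ∂Q := fun n => by
        rw [(ihs n).2, lintegral_congr_ae (hφeq n)]
      have innerφ : (fun y => ∫⁻ x, (⨆ n, fs n (x, y)) ∂S y) =ᵐ[Q] fun y => ⨆ n, φ n y := by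
        filter_upwards [ae_all_iff.2 fun n => hSaem (fs n) (hms n),
          ae_all_iff.2 hφeq] with y hy1 hy2
        rw [lintegral_iSup' (fun n => hy1 n)
          (Filter.Eventually.of_forall fun x n m hnm => hmono hnm (x, y))]
        exact iSup_congr fun n => hy2 n
      have hφmono : ∀ᵐ y ∂Q, Monotone fun n => φ n y := by
        filter_upwards [ae_all_iff.2 hφeq] with y hy
        intro n m hnm
        exact le_trans (le_of_eq (hy n).symm)
          (le_trans (lintegral_mono fun x => hmono hnm (x, y)) (le_of_eq (hy m)))
      constructor
      · exact ⟨fun y => ⨆ n, φ n y, Measurable.iSup hφm, innerφ⟩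
      · calc ∫⁻ p, (⨆ n, fs n p) ∂(Rd) = ⨆ n, ∫⁻ p, fs n p ∂(Rd) := lintegral_iSup hms hmono
          _ = ⨆ n, ∫⁻ y, φ n y ∂Q := by exact iSup_congr hint
          _ = ∫⁻ y, (⨆ n, φ n y) ∂Q :=
              (lintegral_iSup' (fun n => (hφm n).aemeasurable) hφmono).symm
          _ = ∫⁻ y, ∫⁻ x, (⨆ n, fs n (x, y)) ∂S y ∂Q := (lintegral_congr_ae innerφ).symm
  haveI := hRdprob
  refine ⟨parta, partb, ?_⟩
  -- part (c)
  have hXY : Nonempty (X × Y) := by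
    by_contra h
    rw [not_nonempty_iff] at h
    have he : (univ : Set (X × Y)) = ∅ := Set.eq_empty_of_isEmpty _
    have h1 : R univ = 1 := measure_univ
    rw [he, measure_empty] at h1
    exact zero_ne_one h1
  have hC : 0 ≤ C := le_trans (abs_nonneg _) (hbd (Classical.arbitrary _))
  have hmp : @Measurable _ _ mAoB _ (fun p => ENNReal.ofReal (f p)) :=
    ENNReal.measurable_ofReal.comp hf
  have hmn : @Measurable _ _ mAoB _ (fun p => ENNReal.ofReal (-f p)) :=
    ENNReal.measurable_ofReal.comp hf.neg
  obtain ⟨⟨φp, hφp, heqp⟩, hintp⟩ := lint _ hmp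
  obtain ⟨⟨φn, hφn, heqn⟩, hintn⟩ := lint _ hmn
  have hbound : ∀ g : X × Y → ℝ, (∀ p, g p ≤ C) →
      ∫⁻ p, ENNReal.ofReal (g p) ∂(Rd) ≠ ⊤ := by
    intro g hgC
    refine ne_of_lt (lt_of_le_of_lt (lintegral_mono
      (g := fun _ => ENNReal.ofReal C) fun p => ENNReal.ofReal_le_ofReal (hgC p)) ?_)
    rw [lintegral_const, measure_univ, mul_one]
    exact ENNReal.ofReal_lt_top
  have hgpfin : ∫⁻ p, ENNReal.ofReal (f p) ∂(Rd) ≠ ⊤ :=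
    hbound f fun p => le_trans (le_abs_self _) (hbd p)
  have hgnfin : ∫⁻ p, ENNReal.ofReal (-f p) ∂(Rd) ≠ ⊤ :=
    hbound (fun p => -f p) fun p => le_trans (neg_le_abs _) (hbd p)
  have hφpfin : ∫⁻ y, φp y ∂Q ≠ ⊤ := by
    rw [← lintegral_congr_ae heqp, ← hintp]; exact hgpfin
  have hφnfin : ∫⁻ y, φn y ∂Q ≠ ⊤ := by
    rw [← lintegral_congr_ae heqn, ← hintn]; exact hgnfin
  have hfint : Integrable f Rd := by
    refine ⟨hf.aestronglyMeasurable, ?_⟩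
    exact HasFiniteIntegral.of_bounded (C := C)
      (Filter.Eventually.of_forall fun p => by
        simpa [Real.norm_eq_abs] using hbd p)
  have hGae : (fun y => ∫ x, f (x, y) ∂S y) =ᵐ[Q] fun y => (φp y).toReal - (φn y).toReal := by
    filter_upwards [secFun ℝ _ inferInstance f hf, heqp, heqn] with y hy h1 h2
    haveI := hS y
    have haes : @AEStronglyMeasurable X ℝ _ (𝔄y y) (𝔄y y) (fun x => f (x, y)) (S y) :=
      hy.aemeasurable.aestronglyMeasurable
    have hintf : Integrable (fun x => f (x, y)) (S y) := by
      refine ⟨haes, HasFiniteIntegral.of_bounded (C := C)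
        (Filter.Eventually.of_forall fun x => by
          simpa [Real.norm_eq_abs] using hbd (x, y))⟩
    rw [integral_eq_lintegral_pos_part_sub_lintegral_neg_part hintf]
    have h1' : ∫⁻ x, ENNReal.ofReal (f (x, y)) ∂S y = φp y := h1
    have h2' : ∫⁻ x, ENNReal.ofReal (-f (x, y)) ∂S y = φn y := h2
    rw [h1', h2']
  have hip : Integrable (fun y => (φp y).toReal) Q :=
    integrable_toReal_of_lintegral_ne_top hφp.aemeasurable hφpfin
  have hin : Integrable (fun y => (φn y).toReal) Q :=
    integrable_toReal_of_lintegral_ne_top hφn.aemeasurable hφnfin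
  calc ∫ p, f p ∂(Rd)
      = (∫⁻ p, ENNReal.ofReal (f p) ∂(Rd)).toReal
        - (∫⁻ p, ENNReal.ofReal (-f p) ∂(Rd)).toReal :=
        integral_eq_lintegral_pos_part_sub_lintegral_neg_part hfint
    _ = (∫⁻ y, φp y ∂Q).toReal - (∫⁻ y, φn y ∂Q).toReal := by
        rw [hintp, hintn, lintegral_congr_ae heqp, lintegral_congr_ae heqn]
    _ = (∫ y, (φp y).toReal ∂Q) - ∫ y, (φn y).toReal ∂Q := by
        rw [integral_toReal hφp.aemeasurable (ae_lt_top hφp hφpfin),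
          integral_toReal hφn.aemeasurable (ae_lt_top hφn hφnfin)]
    _ = ∫ y, ((φp y).toReal - (φn y).toReal) ∂Q := (integral_sub hip hin).symm
    _ = ∫ y, ∫ x, f (x, y) ∂S y ∂Q := (integral_congr_ae hGae).symm
end

section
/- Let (X, 𝔄, P) and (Y, 𝔅, Q) be probability spaces with (Y, 𝔅, Q) complete, and suppose R ∈ P·Q has a Q-disintegration {(𝔄_y, S_y) : y ∈ Y}. For A ∈ 𝔄 and B ∈ 𝔅, the disintegration identity ∫_B S_y(A) dQ(y) = R(A × B) extends to the product σ-algebra: for every W ∈ 𝔄 ⊗ 𝔅 there is a Q-null set N such that W^y ∈ 𝔄_y for all y ∉ N, the function y ↦ S_y(W^y) is Q-measurable off N, and R(W) = ∫_Y S_y(W^y) dQ(y). -/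
open MeasureTheory Set

theorem stmt10 {X Y : Type*} [mX : MeasurableSpace X] [mY : MeasurableSpace Y]
    (P : Measure X) (Q : Measure Y) [IsProbabilityMeasure P] [IsProbabilityMeasure Q]
    -- (Y, 𝔅, Q) is complete
    (hQcomplete : ∀ N : Set Y, Q N = 0 → MeasurableSet N)
    (R : Measure (X × Y)) [IsProbabilityMeasure R]
    (hRP : ∀ A, MeasurableSet A → R (A ×ˢ (univ : Set Y)) = P A)
    (hRQ : ∀ B, MeasurableSet B → R ((univ : Set X) ×ˢ B) = Q B)
    (𝔄y : Y → MeasurableSpace X) (hsub : ∀ y, 𝔄y y ≤ mX)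
    (S : ∀ y, @Measure X (𝔄y y)) (hS : ∀ y, @IsProbabilityMeasure X (𝔄y y) (S y))
    (hDis1 : ∀ A : Set X, MeasurableSet A → ∃ N, MeasurableSet N ∧ Q N = 0 ∧
      (∀ y ∉ N, MeasurableSet[𝔄y y] A) ∧
      ∃ g : Y → ENNReal, Measurable g ∧ ∀ y ∉ N, S y A = g y)
    (hDis2 : ∀ (A : Set X) (B : Set Y), MeasurableSet A → MeasurableSet B →
      ∫⁻ y in B, S y A ∂Q = R (A ×ˢ B)) :
    ∀ W : Set (X × Y), MeasurableSet W →
      ∃ N : Set Y, MeasurableSet N ∧ Q N = 0 ∧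
        (∀ y ∉ N, MeasurableSet[𝔄y y] {x | (x, y) ∈ W}) ∧
        (∃ g : Y → ENNReal, Measurable g ∧ ∀ y ∉ N, S y {x | (x, y) ∈ W} = g y) ∧
        R W = ∫⁻ y, S y {x | (x, y) ∈ W} ∂Q := by
  have key : ∀ ⦃W : Set (X × Y)⦄, MeasurableSet W →
      (∃ N : Set Y, MeasurableSet N ∧ Q N = 0 ∧
        (∀ y ∉ N, MeasurableSet[𝔄y y] {x | (x, y) ∈ W}) ∧
        (∃ g : Y → ENNReal, Measurable g ∧ ∀ y ∉ N, S y {x | (x, y) ∈ W} = g y) ∧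
        R W = ∫⁻ y, S y {x | (x, y) ∈ W} ∂Q) := by
    classical
    refine MeasurableSpace.induction_on_inter generateFrom_prod.symm isPiSystem_prod ?_ ?_ ?_ ?_
    · -- empty set
      refine ⟨∅, MeasurableSet.empty, measure_empty, fun y _ => ?_, ⟨0, measurable_const,
        fun y _ => ?_⟩, ?_⟩
      · simpa using (MeasurableSet.empty : MeasurableSet[𝔄y y] ∅)
      · simpa using (measure_empty : S y ∅ = 0)
      · simp
    · -- rectangles
      rintro t ⟨A, hA, B, hB, rfl⟩
      simp only [Set.mem_setOf_eq] at hA hB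
      obtain ⟨N, hNm, hN0, hmeas, g, hg, hgeq⟩ := hDis1 A hA
      have hslice : ∀ y, {x | (x, y) ∈ A ×ˢ B} = if y ∈ B then A else (∅ : Set X) := by
        intro y
        ext x
        by_cases hy : y ∈ B <;> simp [hy, Set.mem_prod]
      refine ⟨N, hNm, hN0, fun y hy => ?_, ⟨B.indicator g, hg.indicator hB, fun y hy => ?_⟩, ?_⟩
      · rw [hslice y]; by_cases hyB : y ∈ B
        · simpa [hyB] using hmeas y hy
        · simp [hyB]
      · rw [hslice y]; by_cases hyB : y ∈ B
        · simp [hyB, Set.indicator_of_mem hyB, hgeq y hy]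
        · simp [hyB, Set.indicator_of_notMem hyB]
      · have hae : (fun y => S y {x | (x, y) ∈ A ×ˢ B}) =ᵐ[Q] fun y => B.indicator (fun y => S y A) y := by
          filter_upwards [measure_eq_zero_iff_ae_notMem.mp hN0] with y hy
          rw [hslice y]; by_cases hyB : y ∈ B
          · simp [hyB, Set.indicator_of_mem hyB]
          · simp [hyB, Set.indicator_of_notMem hyB]
        rw [lintegral_congr_ae hae, lintegral_indicator hB, hDis2 A B hA hB]
    · -- complements
      rintro t ht ⟨N, hNm, hN0, hmeas, ⟨g, hg, hgeq⟩, hint⟩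
      have hsle : ∀ y ∉ N, S y {x | (x, y) ∈ t} ≤ 1 := fun y _ => by
        haveI := hS y; exact prob_le_one
      refine ⟨N, hNm, hN0, fun y hy => ?_, ⟨fun y => 1 - g y,
        (measurable_const.sub hg), fun y hy => ?_⟩, ?_⟩
      · have h1 : {x | (x, y) ∈ tᶜ} = {x | (x, y) ∈ t}ᶜ := rfl
        rw [h1]; exact (hmeas y hy).compl
      · have h1 : {x | (x, y) ∈ tᶜ} = {x | (x, y) ∈ t}ᶜ := rfl
        haveI := hS y
        rw [h1, measure_compl (hmeas y hy) (measure_ne_top _ _), measure_univ, hgeq y hy]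
      · have hae1 : (fun y => S y {x | (x, y) ∈ tᶜ}) =ᵐ[Q] fun y => 1 - g y := by
          filter_upwards [measure_eq_zero_iff_ae_notMem.mp hN0] with y hy
          have h1 : {x | (x, y) ∈ tᶜ} = {x | (x, y) ∈ t}ᶜ := rfl
          haveI := hS y
          rw [h1, measure_compl (hmeas y hy) (measure_ne_top _ _), measure_univ, hgeq y hy]
        have hae2 : (fun y => S y {x | (x, y) ∈ t}) =ᵐ[Q] g := by
          filter_upwards [measure_eq_zero_iff_ae_notMem.mp hN0] with y hy
          exact hgeq y hy
        have hgle : g ≤ᵐ[Q] fun _ => 1 := by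
          filter_upwards [measure_eq_zero_iff_ae_notMem.mp hN0] with y hy
          rw [← hgeq y hy]; exact hsle y hy
        have hgint : ∫⁻ y, g y ∂Q = R t := by
          rw [hint]; exact (lintegral_congr_ae hae2).symm
        have hgfin : ∫⁻ y, g y ∂Q ≠ ⊤ := by
          rw [hgint]; exact measure_ne_top _ _
        rw [lintegral_congr_ae hae1, lintegral_sub hg hgfin hgle, hgint,
          measure_compl ht (measure_ne_top _ _), measure_univ, lintegral_one, measure_univ]
    · -- countable disjoint unions
      intro f hdisj hfm hC
      choose N hN using hC
      have hNm : ∀ i, MeasurableSet (N i) := fun i => (hN i).1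
      have hN0 : ∀ i, Q (N i) = 0 := fun i => (hN i).2.1
      have hmeas : ∀ i, ∀ y ∉ N i, MeasurableSet[𝔄y y] {x | (x, y) ∈ f i} :=
        fun i => (hN i).2.2.1
      choose g hg' using fun i => (hN i).2.2.2.1
      have hg : ∀ i, Measurable (g i) := fun i => (hg' i).1
      have hgeq : ∀ i, ∀ y ∉ N i, S y {x | (x, y) ∈ f i} = g i y := fun i => (hg' i).2
      have hint : ∀ i, R (f i) = ∫⁻ y, S y {x | (x, y) ∈ f i} ∂Q := fun i => (hN i).2.2.2.2
      refine ⟨⋃ i, N i, MeasurableSet.iUnion hNm, ?_, fun y hy => ?_,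
        ⟨fun y => ∑' i, g i y, Measurable.ennreal_tsum hg, fun y hy => ?_⟩, ?_⟩
      · exact measure_iUnion_null hN0
      · have : {x | (x, y) ∈ ⋃ i, f i} = ⋃ i, {x | (x, y) ∈ f i} := by
          ext x; simp
        rw [this]
        exact MeasurableSet.iUnion fun i => hmeas i y (fun h => hy (Set.mem_iUnion.mpr ⟨i, h⟩))
      · have hslices : {x | (x, y) ∈ ⋃ i, f i} = ⋃ i, {x | (x, y) ∈ f i} := by
          ext x; simp
        have hdisj' : Pairwise (Function.onFun Disjoint fun i => {x | (x, y) ∈ f i}) := by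
          intro i j hij
          refine Set.disjoint_left.mpr fun x hxi hxj => ?_
          exact Set.disjoint_left.mp (hdisj hij) hxi hxj
        rw [hslices, measure_iUnion hdisj'
          (fun i => hmeas i y (fun h => hy (Set.mem_iUnion.mpr ⟨i, h⟩)))]
        exact tsum_congr fun i => hgeq i y (fun h => hy (Set.mem_iUnion.mpr ⟨i, h⟩))
      · have hNtot : Q (⋃ i, N i) = 0 := measure_iUnion_null hN0
        have hae : (fun y => S y {x | (x, y) ∈ ⋃ i, f i}) =ᵐ[Q] fun y => ∑' i, g i y := by
          filter_upwards [measure_eq_zero_iff_ae_notMem.mp hNtot] with y hy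
          have hslices : {x | (x, y) ∈ ⋃ i, f i} = ⋃ i, {x | (x, y) ∈ f i} := by
            ext x; simp
          have hdisj' : Pairwise (Function.onFun Disjoint fun i => {x | (x, y) ∈ f i}) := by
            intro i j hij
            refine Set.disjoint_left.mpr fun x hxi hxj => ?_
            exact Set.disjoint_left.mp (hdisj hij) hxi hxj
          rw [hslices, measure_iUnion hdisj'
            (fun i => hmeas i y (fun h => hy (Set.mem_iUnion.mpr ⟨i, h⟩)))]
          exact tsum_congr fun i => hgeq i y (fun h => hy (Set.mem_iUnion.mpr ⟨i, h⟩))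
        have haei : ∀ i, (fun y => S y {x | (x, y) ∈ f i}) =ᵐ[Q] g i := fun i => by
          filter_upwards [measure_eq_zero_iff_ae_notMem.mp (hN0 i)] with y hy
          exact hgeq i y hy
        rw [lintegral_congr_ae hae, lintegral_tsum fun i => (hg i).aemeasurable,
          measure_iUnion hdisj hfm]
        exact tsum_congr fun i => by rw [hint i, lintegral_congr_ae (haei i)]
  exact fun W hW => key hW
end

section
/- Let (Z, 𝔷, T) be a probability space, (𝔷_n)_{n∈ℕ} an increasing sequence of sub-σ-algebras of 𝔷 with 𝔷 = σ(⋃_n 𝔷_n), and for each n a lower density τ_n on 𝔷_n (with values in 𝔷) such that τ_{n+1} restricted to 𝔷_n equals τ_n. Then the formula τ(B) := ⋂_{k∈ℕ} ⋃_{n∈ℕ} ⋂_{m≥n} τ_m({E_{𝔷_m}(χ_B) > 1 − 2^{−k}}), for B ∈ 𝔷, where E_{𝔷_m}(χ_B) denotes (a version of) the conditional expectation of the indicator of B with respect to 𝔷_m, defines a lower density τ on 𝔷 with τ restricted to 𝔷_n equal to τ_n for each n. -/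
open MeasureTheory Set Filter Topology

section
variable {Z : Type*} [mZ : MeasurableSpace Z] (T : Measure Z) (m : ℕ → MeasurableSpace Z)

/-- the superlevel set of the conditional expectation -/
def cS (B : Set Z) (j k : ℕ) : Set Z :=
  {z | 1 - (2 : ℝ)⁻¹ ^ k < (T[B.indicator (fun _ => (1 : ℝ)) | m j]) z}

lemma cS_meas (B : Set Z) (j k : ℕ) : MeasurableSet[m j] (cS T m B j k) := by
  have h : StronglyMeasurable[m j] (T[B.indicator (fun _ => (1 : ℝ)) | m j]) :=
    stronglyMeasurable_condExp
  exact stronglyMeasurable_const.measurableSet_lt h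

/-- null difference from a.e. implication -/
lemma diff_null {S₁ S₂ : Set Z} (h : ∀ᵐ z ∂T, z ∈ S₁ → z ∈ S₂) : T (S₁ \ S₂) = 0 := by
  rw [ae_iff] at h
  refine measure_mono_null (fun z hz => ?_) h
  simp only [mem_setOf_eq, Classical.not_imp]
  exact ⟨hz.1, hz.2⟩

lemma symmDiff_null {S₁ S₂ : Set Z} (h : ∀ᵐ z ∂T, z ∈ S₁ ↔ z ∈ S₂) :
    T (symmDiff S₁ S₂) = 0 := by
  rw [Set.symmDiff_def]
  exact measure_union_null (diff_null T (h.mono fun z hz => hz.1))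
    (diff_null T (h.mono fun z hz => hz.2))
end

theorem stmt11 {Z : Type*} [mZ : MeasurableSpace Z] (T : Measure Z) [IsProbabilityMeasure T]
    (m : ℕ → MeasurableSpace Z) (hmono : Monotone m) (hle : ∀ n, m n ≤ mZ)
    (hgen : (⨆ n, m n) = mZ)
    (τ : ℕ → Set Z → Set Z)
    (hmeas : ∀ n A, MeasurableSet[m n] A → MeasurableSet (τ n A))
    (hempty : ∀ n, τ n ∅ = ∅) (huniv : ∀ n, τ n univ = univ)
    (hinter : ∀ n A B, MeasurableSet[m n] A → MeasurableSet[m n] B →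
      τ n (A ∩ B) = τ n A ∩ τ n B)
    (hae : ∀ n A, MeasurableSet[m n] A → T (symmDiff (τ n A) A) = 0)
    (hcong : ∀ n A B, MeasurableSet[m n] A → MeasurableSet[m n] B →
      T (symmDiff A B) = 0 → τ n A = τ n B)
    (hcompat : ∀ n A, MeasurableSet[m n] A → τ (n + 1) A = τ n A)
    -- the density defined by the martingale formula
    (τγ : Set Z → Set Z)
    (hτγ : ∀ B : Set Z, τγ B = ⋂ k : ℕ, ⋃ n : ℕ, ⋂ j : ℕ, ⋂ (_ : n ≤ j),
      τ j {z | 1 - (2 : ℝ)⁻¹ ^ k < (T[B.indicator (fun _ => (1 : ℝ)) | m j]) z}) :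
    -- τγ is a lower density on 𝔷 whose restriction to each 𝔷_n is τ_n
    (∀ A, MeasurableSet A → MeasurableSet (τγ A)) ∧
    τγ ∅ = ∅ ∧ τγ univ = univ ∧
    (∀ A B, MeasurableSet A → MeasurableSet B → τγ (A ∩ B) = τγ A ∩ τγ B) ∧
    (∀ A, MeasurableSet A → T (symmDiff (τγ A) A) = 0) ∧
    (∀ A B, MeasurableSet A → MeasurableSet B → T (symmDiff A B) = 0 → τγ A = τγ B) ∧
    (∀ n A, MeasurableSet[m n] A → τγ A = τ n A) := by
  have hτγ' : ∀ B : Set Z, τγ B = ⋂ k : ℕ, ⋃ n : ℕ, ⋂ j : ℕ, ⋂ (_ : n ≤ j),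
      τ j (cS T m B j k) := hτγ
  clear hτγ
  -- basic facts
  have hpow_pos : ∀ k : ℕ, (0:ℝ) < (2:ℝ)⁻¹ ^ k := fun k => pow_pos (by norm_num) k
  have hpow_le : ∀ k : ℕ, (2:ℝ)⁻¹ ^ k ≤ 1 := fun k => pow_le_one₀ (by norm_num) (by norm_num)
  have hInt : ∀ B : Set Z, MeasurableSet B →
      Integrable (B.indicator (fun _ => (1:ℝ))) T :=
    fun B hB => (integrable_const (1:ℝ)).indicator hB
  -- monotonicity of τ modulo null sets
  have hτmono : ∀ j (P Q : Set Z), MeasurableSet[m j] P → MeasurableSet[m j] Q →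
      T (P \ Q) = 0 → τ j P ⊆ τ j Q := by
    intro j P Q hP hQ hnull
    have h1 : τ j P = τ j (P ∩ Q) := by
      refine hcong j P (P ∩ Q) hP (hP.inter hQ) ?_
      rw [Set.symmDiff_def]
      refine measure_union_null ?_ ?_
      · rw [Set.diff_self_inter]; exact hnull
      · exact measure_mono_null (fun z hz => (hz.2 hz.1.1).elim) hnull
    rw [h1, hinter j P Q hP hQ]
    exact inter_subset_right
  -- τ j A = τ n A for A ∈ m n, j ≥ n
  have hτcompat : ∀ n j, n ≤ j → ∀ A, MeasurableSet[m n] A → τ j A = τ n A := by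
    intro n j hnj A hA
    induction j with
    | zero => rw [Nat.le_zero.mp hnj]
    | succ j ih =>
      rcases Nat.lt_or_ge n (j+1) with h | h
      · have hj : n ≤ j := Nat.lt_succ_iff.mp h
        rw [hcompat j A (hmono hj _ hA), ih hj]
      · rw [Nat.le_antisymm hnj h]
  -- condexp of indicator bounded above by 1 a.e.
  have hcond_le_one : ∀ (B : Set Z) j, MeasurableSet B →
      ∀ᵐ z ∂T, (T[B.indicator (fun _ => (1:ℝ)) | m j]) z ≤ 1 := by
    intro B j hB
    have h := condExp_mono (μ := T) (m := m j) (hInt B hB) (integrable_const (1:ℝ))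
      (Filter.Eventually.of_forall fun z => Set.indicator_le_self' (fun _ _ => zero_le_one) z)
    rw [condExp_const (hle j)] at h
    exact h
  -- part 1: measurability
  have part1 : ∀ A : Set Z, MeasurableSet A → MeasurableSet (τγ A) := by
    intro A _
    rw [hτγ' A]
    exact MeasurableSet.iInter fun k => MeasurableSet.iUnion fun n =>
      MeasurableSet.iInter fun j => MeasurableSet.iInter fun _ =>
        hmeas j _ (cS_meas T m A j k)
  -- part 2: empty
  have part2 : τγ ∅ = ∅ := by
    have hS : ∀ j, cS T m (∅ : Set Z) j 0 = ∅ := by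
      intro j
      have h0 : ((∅ : Set Z).indicator (fun _ => (1:ℝ))) = (0 : Z → ℝ) :=
        Set.indicator_empty _
      simp only [cS, h0, condExp_zero, Pi.zero_apply]
      norm_num
    rw [hτγ']
    refine subset_empty_iff.mp ?_
    refine (iInter_subset _ 0).trans ?_
    refine iUnion_subset fun n => ?_
    refine (biInter_subset_of_mem (le_refl n)).trans ?_
    rw [hS n, hempty n]
  -- part 3: univ
  have part3 : τγ univ = univ := by
    have hS : ∀ j k, cS T m (univ : Set Z) j k = univ := by
      intro j k
      simp only [cS, Set.indicator_univ, condExp_const (hle j)]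
      refine eq_univ_of_forall fun z => ?_
      simpa using hpow_pos k
    rw [hτγ']
    refine eq_univ_of_univ_subset ?_
    refine subset_iInter fun k => ?_
    refine subset_iUnion_of_subset 0 ?_
    refine subset_iInter fun j => subset_iInter fun _ => ?_
    rw [hS j k, huniv j]
  -- cS is monotone modulo null in B
  have hS_mono : ∀ (A B : Set Z) j k, MeasurableSet A → MeasurableSet B →
      (∀ z, A.indicator (fun _ => (1:ℝ)) z ≤ B.indicator (fun _ => (1:ℝ)) z) →
      T (cS T m A j k \ cS T m B j k) = 0 := by
    intro A B j k hA hB hAB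
    refine diff_null T ?_
    filter_upwards [condExp_mono (μ := T) (m := m j) (hInt A hA) (hInt B hB)
      (Filter.Eventually.of_forall hAB)] with z hz hmem
    exact lt_of_lt_of_le hmem hz
  -- part 4: intersections
  have part4 : ∀ A B : Set Z, MeasurableSet A → MeasurableSet B →
      τγ (A ∩ B) = τγ A ∩ τγ B := by
    intro A B hA hB
    apply Set.Subset.antisymm
    · refine subset_inter ?_ ?_
      · rw [hτγ' (A ∩ B), hτγ' A]
        refine iInter_mono fun k => iUnion_mono fun n => iInter_mono fun j =>
          iInter_mono fun hnj => ?_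
        refine hτmono j _ _ (cS_meas T m _ j k) (cS_meas T m A j k) ?_
        refine hS_mono _ _ j k (hA.inter hB) hA fun z =>
          Set.indicator_le_indicator_of_subset inter_subset_left (fun _ => zero_le_one) z
      · rw [hτγ' (A ∩ B), hτγ' B]
        refine iInter_mono fun k => iUnion_mono fun n => iInter_mono fun j =>
          iInter_mono fun hnj => ?_
        refine hτmono j _ _ (cS_meas T m _ j k) (cS_meas T m B j k) ?_
        refine hS_mono _ _ j k (hA.inter hB) hB fun z =>
          Set.indicator_le_indicator_of_subset inter_subset_right (fun _ => zero_le_one) z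
    · -- harder direction
      intro z hz
      obtain ⟨hzA, hzB⟩ := hz
      rw [hτγ' A] at hzA
      rw [hτγ' B] at hzB
      rw [hτγ' (A ∩ B)]
      simp only [mem_iInter, mem_iUnion] at hzA hzB ⊢
      intro k
      obtain ⟨n₁, hn₁⟩ := hzA (k+1)
      obtain ⟨n₂, hn₂⟩ := hzB (k+1)
      refine ⟨max n₁ n₂, fun j hj => ?_⟩
      have h1 : z ∈ τ j (cS T m A j (k+1)) := hn₁ j (le_trans (le_max_left _ _) hj)
      have h2 : z ∈ τ j (cS T m B j (k+1)) := hn₂ j (le_trans (le_max_right _ _) hj)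
      have h3 : z ∈ τ j (cS T m A j (k+1) ∩ cS T m B j (k+1)) := by
        rw [hinter j _ _ (cS_meas T m A j (k+1)) (cS_meas T m B j (k+1))]
        exact ⟨h1, h2⟩
      refine hτmono j _ _ ((cS_meas T m A j (k+1)).inter (cS_meas T m B j (k+1)))
        (cS_meas T m _ j k) ?_ h3
      -- T ((cS A ∩ cS B) \ cS (A∩B)) = 0
      refine diff_null T ?_
      -- a.e., E[χ_{A∩B}] ≥ E[χ_A] + E[χ_B] - 1
      have hptwise : (A.indicator (fun _ => (1:ℝ)) + B.indicator (fun _ => (1:ℝ))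
          - fun _ => (1:ℝ)) ≤ (A ∩ B).indicator (fun _ => (1:ℝ)) := by
        intro z
        simp only [Pi.sub_apply, Pi.add_apply, Set.indicator_apply, Set.mem_inter_iff]
        by_cases hzA' : z ∈ A <;> by_cases hzB' : z ∈ B <;>
          simp [hzA', hzB'] <;> norm_num
      have hsum : ∀ᵐ w ∂T, (T[A.indicator (fun _ => (1:ℝ))
            + B.indicator (fun _ => (1:ℝ)) - (fun _ => (1:ℝ)) | m j]) w
          = (T[A.indicator (fun _ => (1:ℝ)) | m j]) w
            + (T[B.indicator (fun _ => (1:ℝ)) | m j]) w - 1 := by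
        have e1 := condExp_sub (μ := T) (m := m j) ((hInt A hA).add (hInt B hB))
          (integrable_const (1:ℝ))
        have e2 := condExp_add (μ := T) (m := m j) (hInt A hA) (hInt B hB)
        filter_upwards [e1, e2] with w hw1 hw2
        rw [hw1]
        simp only [Pi.sub_apply, Pi.add_apply, condExp_const (hle j)] at hw2 ⊢
        rw [hw2]
      have hmono' := condExp_mono (μ := T) (m := m j)
        (((hInt A hA).add (hInt B hB)).sub (integrable_const (1:ℝ)))
        (hInt (A ∩ B) (hA.inter hB)) (Filter.Eventually.of_forall hptwise)
      filter_upwards [hsum, hmono'] with w hw1 hw2 hmem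
      obtain ⟨hwa, hwb⟩ := hmem
      simp only [cS, mem_setOf_eq] at hwa hwb ⊢
      have : 1 - (2:ℝ)⁻¹ ^ k <
          (T[A.indicator (fun _ => (1:ℝ)) | m j]) w
            + (T[B.indicator (fun _ => (1:ℝ)) | m j]) w - 1 := by
        have : (2:ℝ)⁻¹ ^ (k+1) + (2:ℝ)⁻¹ ^ (k+1) = (2:ℝ)⁻¹ ^ k := by ring
        nlinarith [hwa, hwb]
      calc 1 - (2:ℝ)⁻¹ ^ k < _ := this
        _ = (T[A.indicator (fun _ => (1:ℝ))
            + B.indicator (fun _ => (1:ℝ)) - (fun _ => (1:ℝ)) | m j]) w := hw1.symm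
        _ ≤ _ := hw2
  -- part 6: congruence
  have part6 : ∀ A B : Set Z, MeasurableSet A → MeasurableSet B →
      T (symmDiff A B) = 0 → τγ A = τγ B := by
    intro A B hA hB hAB
    have hind : A.indicator (fun _ => (1:ℝ)) =ᵐ[T] B.indicator (fun _ => (1:ℝ)) := by
      have : ∀ᵐ z ∂T, z ∉ symmDiff A B := by
        rw [ae_iff]; simpa using hAB
      filter_upwards [this] with z hz
      rw [Set.mem_symmDiff] at hz
      push_neg at hz
      by_cases hzA : z ∈ A
      · simp [Set.indicator_apply, hzA, hz.1 hzA]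
      · have hzB : z ∉ B := fun h => hzA (hz.2 h)
        simp [Set.indicator_apply, hzA, hzB]
    rw [hτγ' A, hτγ' B]
    refine iInter_congr fun k => iUnion_congr fun n => iInter_congr fun j =>
      iInter_congr fun hnj => ?_
    refine hcong j _ _ (cS_meas T m A j k) (cS_meas T m B j k) ?_
    refine symmDiff_null T ?_
    filter_upwards [condExp_congr_ae (μ := T) (m := m j) hind] with z hz
    simp only [cS, mem_setOf_eq, hz]
  -- part 7: restriction
  have part7 : ∀ n (A : Set Z), MeasurableSet[m n] A → τγ A = τ n A := by
    intro n A hA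
    have hS : ∀ j, n ≤ j → ∀ k, cS T m A j k = A := by
      intro j hnj k
      have hA' : MeasurableSet[m j] A := hmono hnj _ hA
      have hsm : StronglyMeasurable[m j] (A.indicator (fun _ => (1:ℝ))) :=
        stronglyMeasurable_const.indicator hA'
      have := condExp_of_stronglyMeasurable (hle j) hsm (hInt A (hle n A hA))
      ext z
      simp only [cS, mem_setOf_eq, this, Set.indicator_apply]
      by_cases hz : z ∈ A
      · simp only [hz, iff_true]
        rw [Set.indicator_of_mem hz]
        linarith [hpow_pos k]
      · simp only [hz, iff_false]
        rw [Set.indicator_of_notMem hz]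
        intro h
        linarith [hpow_le k]
    rw [hτγ' A]
    apply Set.Subset.antisymm
    · refine (iInter_subset _ 0).trans ?_
      refine iUnion_subset fun n' => ?_
      intro z hz
      simp only [mem_iInter] at hz
      have := hz (max n n') (le_max_right _ _)
      rw [hS (max n n') (le_max_left _ _) 0, hτcompat n (max n n') (le_max_left _ _) A hA] at this
      exact this
    · refine subset_iInter fun k => ?_
      refine subset_iUnion_of_subset n ?_
      refine subset_iInter fun j => subset_iInter fun hnj => ?_
      rw [hS j hnj k, hτcompat n j hnj A hA]
  -- part 5: a.e. property via martingale convergence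
  have part5 : ∀ A : Set Z, MeasurableSet A → T (symmDiff (τγ A) A) = 0 := by
    intro A hA
    set ℱ : Filtration ℕ mZ := ⟨m, hmono, hle⟩ with hℱ
    have hconv : ∀ᵐ z ∂T, Tendsto (fun j => (T[A.indicator (fun _ => (1:ℝ)) | m j]) z)
        atTop (𝓝 (A.indicator (fun _ => (1:ℝ)) z)) := by
      have hsm : StronglyMeasurable[⨆ n, ℱ n] (A.indicator (fun _ => (1:ℝ))) := by
        have : (⨆ n, ℱ n) = mZ := hgen
        rw [this]
        exact stronglyMeasurable_const.indicator hA
      exact (hInt A hA).tendsto_ae_condExp hsm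
    -- a.e., τ j (cS A j k) and cS A j k agree
    have hτae : ∀ᵐ z ∂T, ∀ j k, z ∈ τ j (cS T m A j k) ↔ z ∈ cS T m A j k := by
      rw [ae_all_iff]
      intro j
      rw [ae_all_iff]
      intro k
      have h0 := hae j (cS T m A j k) (cS_meas T m A j k)
      rw [ae_iff]
      refine measure_mono_null ?_ h0
      intro z hz
      simp only [mem_setOf_eq] at hz
      rw [Set.mem_symmDiff]
      tauto
    refine symmDiff_null T ?_
    filter_upwards [hconv, hτae] with z hz hτz
    rw [hτγ' A]
    simp only [mem_iInter, mem_iUnion]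
    constructor
    · intro h
      by_contra hzA
      have hzero : A.indicator (fun _ => (1:ℝ)) z = 0 := by
        simp [Set.indicator_apply, hzA]
      obtain ⟨n₁, hn₁⟩ := h 1
      have hev : ∀ᶠ j in atTop, (T[A.indicator (fun _ => (1:ℝ)) | m j]) z < 1 - (2:ℝ)⁻¹ ^ 1 := by
        refine hz.eventually (eventually_lt_nhds ?_)
        rw [hzero]; norm_num
      obtain ⟨n₂, hn₂⟩ := eventually_atTop.mp hev
      have hmem := (hτz (max n₁ n₂) 1).mp (hn₁ (max n₁ n₂) (le_max_left _ _))
      have := hn₂ (max n₁ n₂) (le_max_right _ _)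
      simp only [cS, mem_setOf_eq] at hmem
      linarith
    · intro hzA k
      have hone : A.indicator (fun _ => (1:ℝ)) z = 1 := by
        simp [Set.indicator_apply, hzA]
      have hev : ∀ᶠ j in atTop,
          1 - (2:ℝ)⁻¹ ^ k < (T[A.indicator (fun _ => (1:ℝ)) | m j]) z := by
        refine hz.eventually (eventually_gt_nhds ?_)
        rw [hone]; linarith [hpow_pos k]
      obtain ⟨n₀, hn₀⟩ := eventually_atTop.mp hev
      refine ⟨n₀, fun j hj => ?_⟩
      exact (hτz j k).mpr (hn₀ j hj)
  exact ⟨part1, part2, part3, part4, part5, part6, part7⟩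
end

section
/- Let (X, 𝔄, P) and (Y, 𝔅, Q) be probability spaces, and for each y ∈ Y let S_y be a probability on a sub-σ-algebra 𝔄_y ⊆ 𝔄 forming a Q-disintegration of a measure R ∈ P·Q. Let ℳ := {E ⊆ X×Y : ∃ Q-null N ∀y ∉ N, Ŝ_y(E^y) = 0} and 𝔄⊙𝔅 := {W △ N : W ∈ 𝔄⊗𝔅, N ∈ ℳ} with measure R̂_⊙(W △ N) = R(W). Then the completion of 𝔄 ⊗ 𝔅 with respect to R is contained in 𝔄⊙𝔅, and R̂_⊙ extends the completion R̂ of R. -/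
open MeasureTheory Set

theorem stmt12 {X Y : Type*} [mX : MeasurableSpace X] [mY : MeasurableSpace Y]
    (P : Measure X) (Q : Measure Y) [IsProbabilityMeasure P] [IsProbabilityMeasure Q]
    (R : Measure (X × Y)) [IsProbabilityMeasure R]
    (hRP : ∀ A, MeasurableSet A → R (A ×ˢ (univ : Set Y)) = P A)
    (hRQ : ∀ B, MeasurableSet B → R ((univ : Set X) ×ˢ B) = Q B)
    (𝔄y : Y → MeasurableSpace X) (hsub : ∀ y, 𝔄y y ≤ mX)
    (S : ∀ y, @Measure X (𝔄y y)) (hS : ∀ y, @IsProbabilityMeasure X (𝔄y y) (S y))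
    (hDis1 : ∀ A : Set X, MeasurableSet A → ∃ N, MeasurableSet N ∧ Q N = 0 ∧
      (∀ y ∉ N, MeasurableSet[𝔄y y] A) ∧
      ∃ g : Y → ENNReal, Measurable g ∧ ∀ y ∉ N, S y A = g y)
    (hDis2 : ∀ (A : Set X) (B : Set Y), MeasurableSet A → MeasurableSet B →
      ∫⁻ y in B, S y A ∂Q = R (A ×ˢ B))
    (memM : Set (X × Y) → Prop)
    (hmemM : ∀ E, memM E ↔
      ∃ N, MeasurableSet N ∧ Q N = 0 ∧ ∀ y ∉ N, S y {x | (x, y) ∈ E} = 0)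
    (Rd : Set (X × Y) → ENNReal)
    (hRd : ∀ W N, MeasurableSet W → memM N → Rd (symmDiff W N) = R W) :
    -- every set measurable for the R-completion of 𝔄 ⊗ 𝔅 belongs to 𝔄⊙𝔅,
    -- and R̂_⊙ agrees there with the completion R̂ of R
    ∀ E : Set (X × Y), NullMeasurableSet E R →
      (∃ W N, MeasurableSet W ∧ memM N ∧ E = symmDiff W N) ∧ Rd E = R E := by
  -- Key: for every product-measurable W there is a Q-a.e. measurable version g of
  -- y ↦ S y (W-section y) with ∫ g = R W, the sections being 𝔄y-measurable a.e.
  have key : ∀ W : Set (X × Y), MeasurableSet W →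
      ∃ N, MeasurableSet N ∧ Q N = 0 ∧
        (∀ y ∉ N, MeasurableSet[𝔄y y] {x | (x, y) ∈ W}) ∧
        ∃ g : Y → ENNReal, Measurable g ∧ (∀ y, g y ≤ 1) ∧
          (∀ y ∉ N, S y {x | (x, y) ∈ W} = g y) ∧ ∫⁻ y, g y ∂Q = R W := by
    classical
    have hSle : ∀ (y : Y) (A : Set X), S y A ≤ 1 := fun y A => by
      haveI := hS y; exact prob_le_one
    refine MeasurableSpace.induction_on_inter generateFrom_prod.symm isPiSystem_prod ?_ ?_ ?_ ?_
    · -- empty set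
      refine ⟨∅, MeasurableSet.empty, measure_empty, fun y _ => ?_, 0, measurable_const,
        fun y => zero_le_one, fun y _ => ?_, by simp⟩
      · have : {x : X | (x, y) ∈ (∅ : Set (X × Y))} = ∅ := by ext x; simp
        rw [this]; exact @MeasurableSet.empty X (𝔄y y)
      · have : {x : X | (x, y) ∈ (∅ : Set (X × Y))} = ∅ := by ext x; simp
        rw [this]; simp
    · -- rectangles
      rintro t ⟨A, hA, B, hB, rfl⟩
      simp only [mem_setOf_eq] at hA hB
      obtain ⟨N, hNm, hN0, hNsec, g₀, hg₀m, hg₀⟩ := hDis1 A hA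
      have hsec : ∀ y, {x : X | (x, y) ∈ A ×ˢ B} = if y ∈ B then A else ∅ := by
        intro y; ext x; by_cases hy : y ∈ B <;> simp [hy, Set.mem_prod]
      refine ⟨N, hNm, hN0, fun y hy => ?_, B.indicator (fun y => min (g₀ y) 1),
        (hg₀m.min measurable_const).indicator hB, fun y => ?_, fun y hy => ?_, ?_⟩
      · rw [hsec y]; by_cases hy' : y ∈ B
        · simpa [hy'] using hNsec y hy
        · simpa [hy'] using @MeasurableSet.empty X (𝔄y y)
      · by_cases hy : y ∈ B <;> simp [Set.indicator_apply, hy, min_le_right]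
      · have hle : S y A ≤ 1 := hSle y A
        rw [hsec y]; by_cases hy' : y ∈ B
        · simp only [if_pos hy', Set.indicator_apply, if_pos hy']
          rw [← hg₀ y hy, min_eq_left hle]
        · simp [if_neg hy', Set.indicator_apply, hy']
      · rw [lintegral_indicator hB _, ← hDis2 A B hA hB]
        refine lintegral_congr_ae (ae_restrict_of_ae ?_)
        filter_upwards [measure_eq_zero_iff_ae_notMem.mp hN0] with y hy
        have hle : S y A ≤ 1 := hSle y A
        rw [← hg₀ y hy, min_eq_left hle]
    · -- complements
      rintro t htm ⟨N, hNm, hN0, hNsec, g, hgm, hg1, hgeq, hgint⟩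
      have hsec : ∀ y, {x : X | (x, y) ∈ tᶜ} = {x : X | (x, y) ∈ t}ᶜ := fun y => rfl
      refine ⟨N, hNm, hN0, fun y hy => ?_, fun y => 1 - g y,
        measurable_const.sub hgm, fun y => tsub_le_self, fun y hy => ?_, ?_⟩
      · rw [hsec y]; exact MeasurableSet.compl (hNsec y hy)
      · haveI := hS y
        rw [hsec y, measure_compl (hNsec y hy) (measure_ne_top _ _)]
        rw [(hS y).measure_univ, hgeq y hy]
      · have h1 : (∫⁻ y, g y ∂Q) ≠ ⊤ := by
          rw [hgint]; exact measure_ne_top R t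
        rw [lintegral_sub hgm h1 (Filter.Eventually.of_forall hg1), lintegral_one,
          measure_univ, hgint, measure_compl htm (measure_ne_top R t), measure_univ]
    · -- countable disjoint unions
      rintro f hdisj hfm hf
      choose N hNm hN0 hNsec g hgm hg1 hgeq hgint using hf
      have hsec : ∀ y, {x : X | (x, y) ∈ ⋃ n, f n} = ⋃ n, {x : X | (x, y) ∈ f n} := by
        intro y; ext x; simp
      have hdisj' : ∀ y, Pairwise (Function.onFun Disjoint fun n => {x : X | (x, y) ∈ f n}) := by
        intro y i j hij
        have := hdisj hij
        rw [Function.onFun, Set.disjoint_left] at this ⊢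
        intro x hxi hxj
        exact this hxi hxj
      refine ⟨⋃ n, N n, MeasurableSet.iUnion hNm, measure_iUnion_null hN0,
        fun y hy => ?_, fun y => min (∑' n, g n y) 1,
        (Measurable.ennreal_tsum hgm).min measurable_const, fun y => min_le_right _ _,
        fun y hy => ?_, ?_⟩
      · rw [hsec y]
        exact MeasurableSet.iUnion fun n =>
          hNsec n y (fun h => hy (Set.mem_iUnion.mpr ⟨n, h⟩))
      · have hy' : ∀ n, y ∉ N n := fun n h => hy (Set.mem_iUnion.mpr ⟨n, h⟩)
        have hU : S y {x : X | (x, y) ∈ ⋃ n, f n} = ∑' n, g n y := by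
          rw [hsec y, measure_iUnion (μ := S y) (hdisj' y)
            (fun n => hNsec n y (hy' n))]
          exact tsum_congr fun n => hgeq n y (hy' n)
        have hle : S y {x : X | (x, y) ∈ ⋃ n, f n} ≤ 1 :=
          hSle y _
        rw [hU]; exact (min_eq_left (hU ▸ hle)).symm
      · have hae : (fun y => min (∑' n, g n y) 1) =ᵐ[Q] fun y => ∑' n, g n y := by
          filter_upwards [measure_eq_zero_iff_ae_notMem.mp
            (measure_iUnion_null hN0 : Q (⋃ n, N n) = 0)] with y hy
          have hy' : ∀ n, y ∉ N n := fun n h => hy (Set.mem_iUnion.mpr ⟨n, h⟩)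
          have hU : S y {x : X | (x, y) ∈ ⋃ n, f n} = ∑' n, g n y := by
            rw [hsec y, measure_iUnion (μ := S y) (hdisj' y)
              (fun n => hNsec n y (hy' n))]
            exact tsum_congr fun n => hgeq n y (hy' n)
          have hle : S y {x : X | (x, y) ∈ ⋃ n, f n} ≤ 1 :=
            hSle y _
          exact min_eq_left (hU ▸ hle)
        rw [lintegral_congr_ae hae, lintegral_tsum (fun n => (hgm n).aemeasurable),
          measure_iUnion hdisj hfm]
        exact tsum_congr fun n => hgint n
  -- Main argument
  intro E hE
  obtain ⟨W, hWm, hEW⟩ := hE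
  have hnull : R (symmDiff E W) = 0 := by
    rwa [← measure_symmDiff_eq_zero_iff] at hEW
  set Z := toMeasurable R (symmDiff E W) with hZdef
  have hZm : MeasurableSet Z := measurableSet_toMeasurable R _
  have hZ0 : R Z = 0 := by rw [hZdef, measure_toMeasurable]; exact hnull
  have hsubZ : symmDiff E W ⊆ Z := subset_toMeasurable R _
  obtain ⟨N, hNm, hN0, -, g, hgm, -, hgeq, hgint⟩ := key Z hZm
  have hg0 : ∀ᵐ y ∂Q, g y = 0 := (lintegral_eq_zero_iff hgm).mp (hgint.trans hZ0)
  have hgnull : Q {y | g y ≠ 0} = 0 := by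
    rw [ae_iff] at hg0; simpa using hg0
  have hM : memM (symmDiff W E) := by
    rw [hmemM]
    refine ⟨N ∪ {y | g y ≠ 0}, hNm.union (hgm (measurableSet_singleton 0)).compl,
      measure_union_null hN0 hgnull, fun y hy => ?_⟩
    have hyN : y ∉ N := fun h => hy (Set.mem_union_left _ h)
    have hyg : g y = 0 := by
      by_contra h
      exact hy (Set.mem_union_right _ h)
    refine measure_mono_null (fun x hx => ?_) ((hgeq y hyN).trans hyg)
    exact hsubZ (by rwa [symmDiff_comm] at hx)
  have hEeq : E = symmDiff W (symmDiff W E) := (symmDiff_symmDiff_cancel_left W E).symm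
  refine ⟨⟨W, symmDiff W E, hWm, hM, hEeq⟩, ?_⟩
  have h1 : Rd E = R W := by rw [hEeq]; exact hRd W (symmDiff W E) hWm hM
  have h2 : R E = R W := measure_congr hEW
  rw [h1, h2]
end
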